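/- arXiv:0903.3866 — 9 statements merged into one kernel-verified Lean document; each statement's English description precedes it below -/
import Mathlib

section
/- Let r, n be integers with 1 ≤ r < n-1. Then every complex zero z* of B_{r,n}(z) satisfies |z*| ≤ r/(n+1-r). -/
/-- For integers `1 ≤ r ≤ n`, the `r`-th section of the binomial expansion of `(1+z)^n`. -/
noncomputable def binomialSection (r n : ℕ) (z : ℂ) : ℂ :=
  ∑ k ∈ Finset.range (r + 1), (n.choose k : ℂ) * z ^ k

private lemma telescope_id (c : ℕ → ℂ) (w : ℂ) (m : ℕ) :
    (1 - w) * ∑ k ∈ Finset.range (m + 1), c k * w ^ k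
      = c 0 + (∑ k ∈ Finset.range m, (c (k + 1) - c k) * w ^ (k + 1)) - c m * w ^ (m + 1) := by
  induction m with
  | zero => simp; ring
  | succ m ih =>
    rw [Finset.sum_range_succ, Finset.sum_range_succ (fun k => (c (k+1) - c k) * w ^ (k+1)),
      mul_add, ih]
    ring

theorem zeros_in_circle (r n : ℕ) (hr : 1 ≤ r) (hrn : r + 1 < n)
    (z : ℂ) (hz : binomialSection r n z = 0) :
    ‖z‖ ≤ (r : ℝ) / ((n : ℝ) + 1 - (r : ℝ)) := by
  set R : ℝ := (r : ℝ) / ((n : ℝ) + 1 - (r : ℝ)) with hRdef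
  have hrn' : (r : ℝ) + 1 < (n : ℝ) := by exact_mod_cast hrn
  have hden : (0:ℝ) < (n : ℝ) + 1 - (r : ℝ) := by linarith
  have hRpos : 0 < R := div_pos (by exact_mod_cast hr) hden
  by_contra hcon
  push_neg at hcon
  -- w = z / R has |w| > 1
  set w : ℂ := z / (R : ℂ) with hwdef
  have hRne : (R : ℂ) ≠ 0 := by exact_mod_cast hRpos.ne'
  have hzw : (R : ℂ) * w = z := by rw [hwdef]; field_simp
  set t : ℝ := ‖w‖ with htdef
  have ht1 : 1 < t := by
    have : ‖z‖ = t * R := by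
      rw [htdef, hwdef, norm_div, Complex.norm_real, Real.norm_eq_abs, abs_of_pos hRpos]
      field_simp
    rw [this] at hcon
    by_contra ht
    push_neg at ht
    nlinarith
  have htpos : 0 < t := lt_trans one_pos ht1
  -- scaled coefficients
  set b : ℕ → ℝ := fun k => (n.choose k : ℝ) * R ^ k with hbdef
  have hbnonneg : ∀ k, 0 ≤ b k := fun k =>
    mul_nonneg (Nat.cast_nonneg _) (pow_nonneg hRpos.le _)
  -- monotonicity of b on [0, r]
  have hbmono : ∀ k, k < r → b k ≤ b (k + 1) := by
    intro k hk
    have hkn : k < n := by omega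
    have hchoose : (n.choose (k+1) : ℝ) * (k + 1) = (n.choose k : ℝ) * ((n : ℝ) - k) := by
      have h2 : n.choose (k+1) * (k+1) = n.choose k * (n - k) := Nat.choose_succ_right_eq n k
      have h4 := congrArg (Nat.cast (R := ℝ)) h2
      push_cast [Nat.cast_sub hkn.le] at h4
      linarith
    have hk1 : (0:ℝ) < (k:ℝ) + 1 := by positivity
    -- need (n.choose k) ≤ (n.choose (k+1)) * R
    have key : (n.choose k : ℝ) ≤ (n.choose (k+1) : ℝ) * R := by
      rw [hRdef, ← mul_div_assoc, le_div_iff₀ hden]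
      have hkr : (k:ℝ) + 1 ≤ (r:ℝ) := by exact_mod_cast hk
      have hcpos : (0:ℝ) < n.choose k := by
        exact_mod_cast Nat.choose_pos (le_of_lt hkn)
      nlinarith [hchoose, hk1,
        mul_nonneg (mul_nonneg hcpos.le (sub_nonneg.2 hkr))
          (show (0:ℝ) ≤ (n:ℝ) + 1 by positivity)]
    calc b k = (n.choose k : ℝ) * R ^ k := rfl
      _ ≤ ((n.choose (k+1) : ℝ) * R) * R ^ k := by
          apply mul_le_mul_of_nonneg_right key (pow_nonneg hRpos.le _)
      _ = b (k + 1) := by rw [hbdef]; ring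
  -- the sum in terms of b and w equals binomialSection
  have hsum : ∑ k ∈ Finset.range (r + 1), ((b k : ℝ) : ℂ) * w ^ k = 0 := by
    rw [← hz]
    unfold binomialSection
    apply Finset.sum_congr rfl
    intro k _
    rw [← hzw]
    push_cast [hbdef]
    ring
  -- telescoping identity
  have htel := telescope_id (fun k => ((b k : ℝ) : ℂ)) w r
  rw [hsum, mul_zero] at htel
  have heq : ((b r : ℝ) : ℂ) * w ^ (r + 1)
      = ((b 0 : ℝ) : ℂ) + ∑ k ∈ Finset.range r, (((b (k+1) : ℝ):ℂ) - ((b k : ℝ):ℂ)) * w ^ (k+1) := by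
    exact (sub_eq_zero.mp htel.symm).symm
  -- take absolute values
  have habs : b r * t ^ (r + 1)
      ≤ b 0 + ∑ k ∈ Finset.range r, (b (k+1) - b k) * t ^ (k+1) := by
    have h1 : ‖((b r : ℝ) : ℂ) * w ^ (r + 1)‖ = b r * t ^ (r + 1) := by
      rw [norm_mul, norm_pow, Complex.norm_real, Real.norm_eq_abs, abs_of_nonneg (hbnonneg r), htdef]
    rw [← h1, heq]
    calc ‖((b 0 : ℝ) : ℂ) + ∑ k ∈ Finset.range r,
            (((b (k+1) : ℝ):ℂ) - ((b k : ℝ):ℂ)) * w ^ (k+1)‖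
        ≤ ‖((b 0 : ℝ) : ℂ)‖ + ‖∑ k ∈ Finset.range r,
            (((b (k+1) : ℝ):ℂ) - ((b k : ℝ):ℂ)) * w ^ (k+1)‖ := norm_add_le _ _
      _ ≤ b 0 + ∑ k ∈ Finset.range r, (b (k+1) - b k) * t ^ (k+1) := by
          gcongr
          · rw [Complex.norm_real, Real.norm_eq_abs, abs_of_nonneg (hbnonneg 0)]
          · calc ‖∑ k ∈ Finset.range r,
                  (((b (k+1) : ℝ):ℂ) - ((b k : ℝ):ℂ)) * w ^ (k+1)‖
                ≤ ∑ k ∈ Finset.range r, ‖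
                  (((b (k+1) : ℝ):ℂ) - ((b k : ℝ):ℂ)) * w ^ (k+1)‖ :=
                  norm_sum_le _ _
              _ = ∑ k ∈ Finset.range r, (b (k+1) - b k) * t ^ (k+1) := by
                  apply Finset.sum_congr rfl
                  intro k hk
                  rw [norm_mul, norm_pow, ← Complex.ofReal_sub, Complex.norm_real, Real.norm_eq_abs,
                    abs_of_nonneg (by linarith [hbmono k (Finset.mem_range.mp hk)]), htdef]
  -- bound each power by t^r
  have hbound : b 0 + ∑ k ∈ Finset.range r, (b (k+1) - b k) * t ^ (k+1) ≤ b r * t ^ r := by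
    have h0 : b 0 ≤ b 0 * t ^ r :=
      le_mul_of_one_le_right (hbnonneg 0) (one_le_pow₀ ht1.le)
    have hterm : ∀ k ∈ Finset.range r, (b (k+1) - b k) * t ^ (k+1) ≤ (b (k+1) - b k) * t ^ r := by
      intro k hk
      have hkr := Finset.mem_range.mp hk
      apply mul_le_mul_of_nonneg_left _ (by linarith [hbmono k hkr])
      exact pow_le_pow_right₀ ht1.le (by omega)
    calc b 0 + ∑ k ∈ Finset.range r, (b (k+1) - b k) * t ^ (k+1)
        ≤ b 0 * t ^ r + ∑ k ∈ Finset.range r, (b (k+1) - b k) * t ^ r := by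
          exact add_le_add h0 (Finset.sum_le_sum hterm)
      _ = (b 0 + ∑ k ∈ Finset.range r, (b (k+1) - b k)) * t ^ r := by
          rw [← Finset.sum_mul]; ring
      _ = b r * t ^ r := by
          rw [Finset.sum_range_sub (fun k => b k)]; ring
  -- contradiction
  have hbr : 0 < b r := by
    apply mul_pos _ (pow_pos hRpos r)
    exact_mod_cast Nat.choose_pos (by omega : r ≤ n)
  have : t ^ (r + 1) ≤ t ^ r := by
    have := le_trans habs hbound
    exact le_of_mul_le_mul_left (by linarith) hbr
  have : t ^ r < t ^ (r + 1) := pow_lt_pow_right₀ ht1 (by omega)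
  linarith
end

section
/- Let r, n be integers with 1 ≤ r < n-1, and set γ = r/(n-1) (so 0 < γ < 1). Then every complex zero z* of B_{r,n}(z) satisfies |z* - γ²/(1-γ²)| ≤ γ/(1-γ²). -/
private lemma key_identity (m r : ℕ) (z : ℂ) :
    ∑ k ∈ Finset.range (r + 1), ((m + r + 1).choose k : ℂ) * z ^ k
      = ∑ j ∈ Finset.range (r + 1), ((m + j).choose j : ℂ) * z ^ j * (1 + z) ^ (r - j) := by
  induction r with
  | zero => simp
  | succ r ih =>
    have h1 : ∑ k ∈ Finset.range (r + 1 + 1), ((m + (r + 1) + 1).choose k : ℂ) * z ^ k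
        = (1 + z) * (∑ k ∈ Finset.range (r + 1), ((m + r + 1).choose k : ℂ) * z ^ k)
          + ((m + r + 1).choose (r + 1) : ℂ) * z ^ (r + 1) := by
      rw [Finset.sum_range_succ' (fun k => ((m + (r + 1) + 1).choose k : ℂ) * z ^ k) (r + 1)]
      have hc : ∀ i, ((m + (r + 1) + 1).choose (i + 1) : ℂ)
          = ((m + r + 1).choose i : ℂ) + ((m + r + 1).choose (i + 1) : ℂ) := by
        intro i
        have : (m + (r + 1) + 1) = (m + r + 1) + 1 := by omega
        rw [this, Nat.choose_succ_succ]
        push_cast; ring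
      have e1 : ∑ i ∈ Finset.range (r + 1),
            ((m + (r + 1) + 1).choose (i + 1) : ℂ) * z ^ (i + 1)
          = z * (∑ i ∈ Finset.range (r + 1), ((m + r + 1).choose i : ℂ) * z ^ i)
            + ∑ i ∈ Finset.range (r + 1), ((m + r + 1).choose (i + 1) : ℂ) * z ^ (i + 1) := by
        rw [Finset.mul_sum, ← Finset.sum_add_distrib]
        refine Finset.sum_congr rfl fun i _ => ?_
        rw [hc i]; ring
      have e2 : (∑ i ∈ Finset.range (r + 1), ((m + r + 1).choose (i + 1) : ℂ) * z ^ (i + 1))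
            + ((m + (r + 1) + 1).choose 0 : ℂ) * z ^ 0
          = (∑ k ∈ Finset.range (r + 1), ((m + r + 1).choose k : ℂ) * z ^ k)
            + ((m + r + 1).choose (r + 1) : ℂ) * z ^ (r + 1) := by
        have := Finset.sum_range_succ' (fun k => ((m + r + 1).choose k : ℂ) * z ^ k) (r + 1)
        rw [Finset.sum_range_succ (fun k => ((m + r + 1).choose k : ℂ) * z ^ k) (r + 1)] at this
        simp only [Nat.choose_zero_right] at this ⊢
        exact this.symm
      rw [e1, add_assoc, e2]; ring
    rw [h1, ih, Finset.sum_range_succ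
      (fun j => ((m + j).choose j : ℂ) * z ^ j * (1 + z) ^ (r + 1 - j)) (r + 1)]
    have e3 : (1 + z) * ∑ j ∈ Finset.range (r + 1),
          ((m + j).choose j : ℂ) * z ^ j * (1 + z) ^ (r - j)
        = ∑ j ∈ Finset.range (r + 1), ((m + j).choose j : ℂ) * z ^ j * (1 + z) ^ (r + 1 - j) := by
      rw [Finset.mul_sum]
      refine Finset.sum_congr rfl fun j hj => ?_
      have hj' : j ≤ r := Nat.lt_succ_iff.mp (Finset.mem_range.mp hj)
      have : r + 1 - j = (r - j) + 1 := by omega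
      rw [this, pow_succ]; ring
    rw [e3]
    simp [Nat.sub_self]
    exact Or.inl (by rw [Nat.add_assoc])

private def dd (m : ℕ) : ℕ → ℕ
  | 0 => 0
  | j + 1 => (m + j).choose j

private noncomputable def gg (m r : ℕ) (j : ℕ) : ℝ :=
  (r : ℝ) * ((m + j).choose j : ℝ) - ((m + r : ℕ) : ℝ) * (dd m j : ℝ)

private lemma gg_nonneg (m r : ℕ) {j : ℕ} (hj : j ≤ r) : 0 ≤ gg m r j := by
  cases j with
  | zero => simp [gg, dd]
  | succ j =>
    have key : (m + j + 1) * (m + j).choose j = (m + j + 1).choose (j + 1) * (j + 1) :=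
      Nat.add_one_mul_choose_eq (m + j) j
    have hnat : (m + r) * (m + j).choose j ≤ r * (m + j + 1).choose (j + 1) := by
      have h1 : (m + r) * (m + j).choose j * (j + 1) ≤ r * (m + j + 1).choose (j + 1) * (j + 1) := by
        have h2 : r * ((m + j + 1).choose (j + 1) * (j + 1)) = r * ((m + j + 1) * (m + j).choose j) := by
          rw [key]
        calc (m + r) * (m + j).choose j * (j + 1)
            = ((m + r) * (j + 1)) * (m + j).choose j := by ring
          _ ≤ (r * (m + j + 1)) * (m + j).choose j := by
              have h3 : m * (j + 1) ≤ m * r := Nat.mul_le_mul_left m hj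
              have : (m + r) * (j + 1) ≤ r * (m + j + 1) := by nlinarith [h3]
              exact Nat.mul_le_mul_right _ this
          _ = r * (m + j + 1).choose (j + 1) * (j + 1) := by rw [mul_assoc, ← h2]; ring
      exact Nat.le_of_mul_le_mul_right h1 (Nat.succ_pos j)
    have hcast := Nat.cast_le (α := ℝ) |>.mpr hnat
    simp only [gg, dd]
    rw [sub_nonneg]
    rw [show m + (j + 1) = m + j + 1 by omega]
    push_cast at hcast ⊢
    convert hcast using 3

private lemma telescope_real (m r : ℕ) :
    ∑ j ∈ Finset.range (r + 1), gg m r j * (r : ℝ) ^ j * ((m + r : ℕ) : ℝ) ^ (r - j)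
      = (r : ℝ) ^ (r + 1) * (((m + r).choose r : ℕ) : ℝ) := by
  have split : ∀ j ∈ Finset.range (r + 1),
      gg m r j * (r : ℝ) ^ j * ((m + r : ℕ) : ℝ) ^ (r - j)
        = ((r : ℝ) * ((m + j).choose j : ℝ)) * (r : ℝ) ^ j * ((m + r : ℕ) : ℝ) ^ (r - j)
          - (((m + r : ℕ) : ℝ) * (dd m j : ℝ)) * (r : ℝ) ^ j * ((m + r : ℕ) : ℝ) ^ (r - j) := by
    intro j _; simp only [gg]; ring
  rw [Finset.sum_congr rfl split, Finset.sum_sub_distrib]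
  have first : ∑ j ∈ Finset.range (r + 1),
      ((r : ℝ) * ((m + j).choose j : ℝ)) * (r : ℝ) ^ j * ((m + r : ℕ) : ℝ) ^ (r - j)
      = (∑ j ∈ Finset.range r,
          ((r : ℝ) * ((m + j).choose j : ℝ)) * (r : ℝ) ^ j * ((m + r : ℕ) : ℝ) ^ (r - j))
        + (r : ℝ) ^ (r + 1) * (((m + r).choose r : ℕ) : ℝ) := by
    rw [Finset.sum_range_succ]
    simp [pow_succ]; ring
  have second : ∑ j ∈ Finset.range (r + 1),
      (((m + r : ℕ) : ℝ) * (dd m j : ℝ)) * (r : ℝ) ^ j * ((m + r : ℕ) : ℝ) ^ (r - j)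
      = ∑ j ∈ Finset.range r,
          ((r : ℝ) * ((m + j).choose j : ℝ)) * (r : ℝ) ^ j * ((m + r : ℕ) : ℝ) ^ (r - j) := by
    rw [Finset.sum_range_succ' (fun j =>
      (((m + r : ℕ) : ℝ) * (dd m j : ℝ)) * (r : ℝ) ^ j * ((m + r : ℕ) : ℝ) ^ (r - j)) r]
    simp only [dd, Nat.cast_zero, mul_zero, zero_mul, add_zero]
    refine Finset.sum_congr rfl fun i hi => ?_
    have hi' : i < r := Finset.mem_range.mp hi
    have h1 : r - (i + 1) + 1 = r - i := by omega
    have h2 : ((m + r : ℕ) : ℝ) ^ (r - i)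
        = ((m + r : ℕ) : ℝ) ^ (r - (i + 1)) * ((m + r : ℕ) : ℝ) := by
      rw [← pow_succ, h1]
    rw [h2, pow_succ]
    ring
  rw [first, second]
  ring

private lemma complex_identity (m r : ℕ) (z : ℂ)
    (h0 : ∑ j ∈ Finset.range (r + 1), ((m + j).choose j : ℂ) * z ^ j * (1 + z) ^ (r - j) = 0) :
    ((m + r : ℕ) : ℂ) * (((m + r).choose r : ℕ) : ℂ) * z ^ (r + 1)
      = ∑ j ∈ Finset.range (r + 1), ((gg m r j : ℝ) : ℂ) * z ^ j * (1 + z) ^ (r + 1 - j) := by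
  have split : ∀ j ∈ Finset.range (r + 1),
      ((gg m r j : ℝ) : ℂ) * z ^ j * (1 + z) ^ (r + 1 - j)
        = ((r : ℂ) * ((m + j).choose j : ℂ)) * z ^ j * (1 + z) ^ (r + 1 - j)
          - (((m + r : ℕ) : ℂ) * ((dd m j : ℕ) : ℂ)) * z ^ j * (1 + z) ^ (r + 1 - j) := by
    intro j _
    simp only [gg]
    push_cast
    ring
  rw [Finset.sum_congr rfl split, Finset.sum_sub_distrib]
  have first : ∑ j ∈ Finset.range (r + 1),
      ((r : ℂ) * ((m + j).choose j : ℂ)) * z ^ j * (1 + z) ^ (r + 1 - j) = 0 := by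
    have e : ∀ j ∈ Finset.range (r + 1),
        ((r : ℂ) * ((m + j).choose j : ℂ)) * z ^ j * (1 + z) ^ (r + 1 - j)
          = ((r : ℂ) * (1 + z)) * (((m + j).choose j : ℂ) * z ^ j * (1 + z) ^ (r - j)) := by
      intro j hj
      have hj' : j ≤ r := Nat.lt_succ_iff.mp (Finset.mem_range.mp hj)
      have h1 : r + 1 - j = (r - j) + 1 := by omega
      rw [h1, pow_succ]; ring
    rw [Finset.sum_congr rfl e, ← Finset.mul_sum, h0, mul_zero]
  have sub : ∑ i ∈ Finset.range r, ((m + i).choose i : ℂ) * z ^ i * (1 + z) ^ (r - i)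
      = -(((m + r).choose r : ℕ) : ℂ) * z ^ r := by
    have := Finset.sum_range_succ
      (fun j => ((m + j).choose j : ℂ) * z ^ j * (1 + z) ^ (r - j)) r
    rw [h0] at this
    simp only [Nat.sub_self, pow_zero, mul_one] at this
    linear_combination -this
  have second : ∑ j ∈ Finset.range (r + 1),
      (((m + r : ℕ) : ℂ) * ((dd m j : ℕ) : ℂ)) * z ^ j * (1 + z) ^ (r + 1 - j)
      = -(((m + r : ℕ) : ℂ) * (((m + r).choose r : ℕ) : ℂ) * z ^ (r + 1)) := by
    rw [Finset.sum_range_succ' (fun j =>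
      (((m + r : ℕ) : ℂ) * ((dd m j : ℕ) : ℂ)) * z ^ j * (1 + z) ^ (r + 1 - j)) r]
    simp only [dd, Nat.cast_zero, mul_zero, zero_mul, add_zero]
    have e : ∀ i ∈ Finset.range r,
        (((m + r : ℕ) : ℂ) * (((m + i).choose i : ℕ) : ℂ)) * z ^ (i + 1) * (1 + z) ^ (r + 1 - (i + 1))
          = (((m + r : ℕ) : ℂ) * z) * (((m + i).choose i : ℂ) * z ^ i * (1 + z) ^ (r - i)) := by
      intro i hi
      have h1 : r + 1 - (i + 1) = r - i := by omega
      rw [h1, pow_succ]; ring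
    rw [Finset.sum_congr rfl e, ← Finset.mul_sum, sub]
    ring
  rw [first, second]
  ring

private lemma ek_bound (m r : ℕ) (hr : 1 ≤ r) (z : ℂ)
    (h0 : ∑ j ∈ Finset.range (r + 1), ((m + j).choose j : ℂ) * z ^ j * (1 + z) ^ (r - j) = 0) :
    ((m + r : ℕ) : ℝ) * ‖z‖ ≤ (r : ℝ) * ‖1 + z‖ := by
  by_contra hcon
  push_neg at hcon
  set a : ℝ := ‖z‖ with ha
  set b : ℝ := ‖1 + z‖ with hb
  have ha0 : 0 ≤ a := norm_nonneg z
  have hb0 : 0 ≤ b := norm_nonneg _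
  have hrb : (r : ℝ) * b ≤ ((m + r : ℕ) : ℝ) * a := le_of_lt hcon
  have hapos : 0 < a := by
    by_contra h
    push_neg at h
    have : a = 0 := le_antisymm h ha0
    rw [this] at hcon
    nlinarith [hb0, Nat.cast_nonneg (α := ℝ) r]
  have hcr : (0 : ℝ) < (((m + r).choose r : ℕ) : ℝ) := by
    exact_mod_cast Nat.choose_pos (Nat.le_add_left r m)
  -- master inequality from complex_identity
  have hid := complex_identity m r z h0
  have habs : ((m + r : ℕ) : ℝ) * (((m + r).choose r : ℕ) : ℝ) * a ^ (r + 1)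
      ≤ ∑ j ∈ Finset.range (r + 1), gg m r j * a ^ j * b ^ (r + 1 - j) := by
    have h1 : ‖((m + r : ℕ) : ℂ) * (((m + r).choose r : ℕ) : ℂ) * z ^ (r + 1)‖
        = ((m + r : ℕ) : ℝ) * (((m + r).choose r : ℕ) : ℝ) * a ^ (r + 1) := by
      rw [norm_mul, norm_mul, norm_pow, Complex.norm_natCast, Complex.norm_natCast]
    have h2 : ‖∑ j ∈ Finset.range (r + 1),
          ((gg m r j : ℝ) : ℂ) * z ^ j * (1 + z) ^ (r + 1 - j)‖
        ≤ ∑ j ∈ Finset.range (r + 1), gg m r j * a ^ j * b ^ (r + 1 - j) := by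
      refine (norm_sum_le _ _).trans (le_of_eq ?_)
      refine Finset.sum_congr rfl fun j hj => ?_
      have hj' : j ≤ r := Nat.lt_succ_iff.mp (Finset.mem_range.mp hj)
      rw [norm_mul, norm_mul, norm_pow, norm_pow, Complex.norm_real,
        Real.norm_of_nonneg (gg_nonneg m r hj')]
    calc ((m + r : ℕ) : ℝ) * (((m + r).choose r : ℕ) : ℝ) * a ^ (r + 1)
        = ‖((m + r : ℕ) : ℂ) * (((m + r).choose r : ℕ) : ℂ) * z ^ (r + 1)‖ := h1.symm
      _ = ‖∑ j ∈ Finset.range (r + 1),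
            ((gg m r j : ℝ) : ℂ) * z ^ j * (1 + z) ^ (r + 1 - j)‖ := by rw [hid]
      _ ≤ _ := h2
  -- termwise bound after scaling by r^r
  have hterm : ∀ j ∈ Finset.range (r + 1),
      gg m r j * a ^ j * b ^ (r + 1 - j) * (r : ℝ) ^ r
        ≤ (gg m r j * (r : ℝ) ^ j * ((m + r : ℕ) : ℝ) ^ (r - j)) * (a ^ r * b) := by
    intro j hj
    have hj' : j ≤ r := Nat.lt_succ_iff.mp (Finset.mem_range.mp hj)
    have hg := gg_nonneg m r hj'
    have hpow : ((r : ℝ) * b) ^ (r - j) ≤ (((m + r : ℕ) : ℝ) * a) ^ (r - j) := by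
      apply pow_le_pow_left₀ (by positivity) hrb
    have e1 : b ^ (r + 1 - j) = b * b ^ (r - j) := by
      rw [← pow_succ']
      congr 1
      omega
    have e2 : (r : ℝ) ^ r = (r : ℝ) ^ j * (r : ℝ) ^ (r - j) := by
      rw [← pow_add]; congr 1; omega
    have e3 : a ^ r = a ^ j * a ^ (r - j) := by
      rw [← pow_add]; congr 1; omega
    rw [e1, e2, e3, mul_pow] at *
    rw [mul_pow] at hpow
    calc gg m r j * a ^ j * (b * (b ^ (r - j))) * ((r:ℝ) ^ j * (r:ℝ) ^ (r - j))
        = (gg m r j * a ^ j * b * (r:ℝ) ^ j) * ((r:ℝ) ^ (r - j) * b ^ (r - j)) := by ring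
      _ ≤ (gg m r j * a ^ j * b * (r:ℝ) ^ j) * (((m + r : ℕ) : ℝ) ^ (r - j) * a ^ (r - j)) := by
          apply mul_le_mul_of_nonneg_left hpow
          positivity
      _ = (gg m r j * (r : ℝ) ^ j * ((m + r : ℕ) : ℝ) ^ (r - j)) * ((a ^ j * a ^ (r - j)) * b) := by
          ring
  have hsum : (∑ j ∈ Finset.range (r + 1), gg m r j * a ^ j * b ^ (r + 1 - j)) * (r : ℝ) ^ r
      ≤ (r : ℝ) ^ (r + 1) * (((m + r).choose r : ℕ) : ℝ) * (a ^ r * b) := by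
    rw [Finset.sum_mul]
    calc ∑ j ∈ Finset.range (r + 1), gg m r j * a ^ j * b ^ (r + 1 - j) * (r : ℝ) ^ r
        ≤ ∑ j ∈ Finset.range (r + 1),
            (gg m r j * (r : ℝ) ^ j * ((m + r : ℕ) : ℝ) ^ (r - j)) * (a ^ r * b) :=
          Finset.sum_le_sum hterm
      _ = (∑ j ∈ Finset.range (r + 1),
            gg m r j * (r : ℝ) ^ j * ((m + r : ℕ) : ℝ) ^ (r - j)) * (a ^ r * b) := by
          rw [Finset.sum_mul]
      _ = (r : ℝ) ^ (r + 1) * (((m + r).choose r : ℕ) : ℝ) * (a ^ r * b) := by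
          rw [telescope_real]
  have hrr : (0 : ℝ) < (r : ℝ) ^ r := by positivity
  have har : (0 : ℝ) < a ^ r := by positivity
  have key := (mul_le_mul_of_nonneg_right habs hrr.le).trans hsum
  have hlt := mul_lt_mul_of_pos_left hcon (mul_pos (mul_pos hrr hcr) har)
  have e1 : a ^ (r + 1) = a ^ r * a := pow_succ a r
  have e2 : (r : ℝ) ^ (r + 1) = (r : ℝ) ^ r * r := pow_succ _ r
  rw [e1, e2] at key
  nlinarith [key, hlt]

theorem zeros_in_second_circle (r n : ℕ) (hr : 1 ≤ r) (hrn : r + 1 < n)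
    (γ : ℝ) (hγ : γ = (r : ℝ) / ((n : ℝ) - 1))
    (z : ℂ) (hz : binomialSection r n z = 0) :
    ‖z - ((γ ^ 2 / (1 - γ ^ 2) : ℝ) : ℂ)‖ ≤ γ / (1 - γ ^ 2) := by
  obtain ⟨m, rfl⟩ : ∃ m, n = m + r + 1 := ⟨n - r - 1, by omega⟩
  have hm : 1 ≤ m := by omega
  unfold binomialSection at hz
  rw [key_identity m r z] at hz
  have hek := ek_bound m r hr z hz
  have hmr : (0 : ℝ) < ((m + r : ℕ) : ℝ) := by
    have : 0 < m + r := by omega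
    exact_mod_cast this
  have hγ' : γ = (r : ℝ) / ((m + r : ℕ) : ℝ) := by
    rw [hγ]
    congr 1
    push_cast
    ring
  have hγpos : 0 < γ := by
    rw [hγ']
    apply div_pos
    · exact_mod_cast hr
    · exact hmr
  have hγlt : γ < 1 := by
    rw [hγ']
    rw [div_lt_one hmr]
    have : r < m + r := by omega
    exact_mod_cast this
  have hu : (0 : ℝ) < 1 - γ ^ 2 := by nlinarith
  have hle : ‖z‖ ≤ γ * ‖1 + z‖ := by
    rw [hγ', div_mul_eq_mul_div, le_div_iff₀ hmr]
    nlinarith [hek]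
  have ha0 : 0 ≤ ‖z‖ := norm_nonneg z
  have hsq : (‖z‖) ^ 2 ≤ (γ * ‖1 + z‖) ^ 2 :=
    pow_le_pow_left₀ ha0 hle 2
  rw [mul_pow, Complex.sq_norm, Complex.sq_norm] at hsq
  set x := z.re with hx
  set y := z.im with hy
  have hsq' : x ^ 2 + y ^ 2 ≤ γ ^ 2 * ((1 + x) ^ 2 + y ^ 2) := by
    have e1 : Complex.normSq z = x ^ 2 + y ^ 2 := by
      rw [Complex.normSq_apply]; ring
    have e2 : Complex.normSq (1 + z) = (1 + x) ^ 2 + y ^ 2 := by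
      rw [Complex.normSq_apply]
      simp [Complex.add_re, Complex.add_im]
      ring
    rw [e1, e2] at hsq
    exact hsq
  have hR : 0 ≤ γ / (1 - γ ^ 2) := by positivity
  have hre : (z - ((γ ^ 2 / (1 - γ ^ 2) : ℝ) : ℂ)).re = x - γ ^ 2 / (1 - γ ^ 2) := by
    rw [Complex.sub_re, Complex.ofReal_re]
  have him : (z - ((γ ^ 2 / (1 - γ ^ 2) : ℝ) : ℂ)).im = y := by
    rw [Complex.sub_im, Complex.ofReal_im, sub_zero]
  rw [Complex.norm_def, Complex.normSq_apply, hre, him]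
  have key : ((1 - γ ^ 2) * x - γ ^ 2) ^ 2 + ((1 - γ ^ 2) * y) ^ 2 ≤ γ ^ 2 := by
    nlinarith [mul_nonneg hu.le (sub_nonneg.2 hsq')]
  have e3 : (x - γ ^ 2 / (1 - γ ^ 2)) * (x - γ ^ 2 / (1 - γ ^ 2)) + y * y
      = (((1 - γ ^ 2) * x - γ ^ 2) ^ 2 + ((1 - γ ^ 2) * y) ^ 2) / (1 - γ ^ 2) ^ 2 := by
    field_simp
  have e4 : (γ / (1 - γ ^ 2)) ^ 2 = γ ^ 2 / (1 - γ ^ 2) ^ 2 := by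
    rw [div_pow]
  have hb2 : (x - γ ^ 2 / (1 - γ ^ 2)) * (x - γ ^ 2 / (1 - γ ^ 2)) + y * y
      ≤ (γ / (1 - γ ^ 2)) ^ 2 := by
    rw [e3, e4]
    apply div_le_div_of_nonneg_right key
    positivity
  calc Real.sqrt ((x - γ ^ 2 / (1 - γ ^ 2)) * (x - γ ^ 2 / (1 - γ ^ 2)) + y * y)
      ≤ Real.sqrt ((γ / (1 - γ ^ 2)) ^ 2) := Real.sqrt_le_sqrt hb2
    _ = γ / (1 - γ ^ 2) := Real.sqrt_sq hR
end

section
/- Let r, n be integers with 1 ≤ r < n-1. Then every complex zero z* of B_{r,n}(z) satisfies Re z* > -1/2. -/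
open Finset

lemma hockey' (m : ℕ) : ∀ r : ℕ, ∑ j ∈ range (r+1), (m+j).choose j = (m+r+1).choose r := by
  intro r
  induction r with
  | zero => simp
  | succ r ih =>
      rw [Finset.sum_range_succ, ih,
        show m + (r+1) + 1 = (m+r+1) + 1 by ring,
        show m + (r+1) = m + r + 1 by ring]
      exact (Nat.choose_succ_succ (m+r+1) r).symm

lemma hockey (n r : ℕ) (h : r + 2 ≤ n) :
    ∑ i ∈ range (r+1), (n-2-i).choose (r-i) = (n-1).choose r := by
  have h1 := Finset.sum_range_reflect (fun i => (n-2-i).choose (r-i)) (r+1)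
  rw [← h1]
  have h2 : ∀ j ∈ range (r+1), (n-2-(r+1-1-j)).choose (r-(r+1-1-j)) = ((n-2-r)+j).choose j := by
    intro j hj
    simp only [mem_range] at hj
    congr 1 <;> omega
  rw [Finset.sum_congr rfl h2, hockey' (n-2-r) r]
  congr 1
  omega

lemma Brec (n r : ℕ) (z : ℂ) :
    ∑ k ∈ range (r+2), ((n+1).choose k : ℂ) * z^k
      = ∑ k ∈ range (r+2), (n.choose k : ℂ) * z^k
        + z * ∑ k ∈ range (r+1), (n.choose k : ℂ) * z^k := by
  rw [Finset.sum_range_succ' (fun k => ((n+1).choose k : ℂ) * z^k) (r+1),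
    Finset.sum_range_succ' (fun k => (n.choose k : ℂ) * z^k) (r+1),
    Finset.mul_sum]
  have key : ∑ k ∈ range (r+1), ((n+1).choose (k+1) : ℂ) * z^(k+1)
      = ∑ k ∈ range (r+1), (n.choose (k+1) : ℂ) * z^(k+1)
        + ∑ k ∈ range (r+1), z * ((n.choose k : ℂ) * z^k) := by
    rw [← Finset.sum_add_distrib]
    apply Finset.sum_congr rfl
    intro k _
    rw [Nat.choose_succ_succ]
    push_cast
    ring
  rw [key]
  simp only [Nat.choose_zero_right]
  ring

lemma Srec (n r : ℕ) (h : r + 2 ≤ n) (z : ℂ) :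
    ∑ i ∈ range (r+2), ((n-i).choose (r+1-i) : ℂ) * (z+1)^i * z^(r+1-i)
      = ∑ i ∈ range (r+2), ((n-1-i).choose (r+1-i) : ℂ) * (z+1)^i * z^(r+1-i)
        + z * ∑ i ∈ range (r+1), ((n-1-i).choose (r-i) : ℂ) * (z+1)^i * z^(r-i) := by
  rw [Finset.sum_range_succ, Finset.sum_range_succ
    (fun i => ((n-1-i).choose (r+1-i) : ℂ) * (z+1)^i * z^(r+1-i)) (r+1),
    Finset.mul_sum]
  have key : ∑ i ∈ range (r+1), ((n-i).choose (r+1-i) : ℂ) * (z+1)^i * z^(r+1-i)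
      = ∑ i ∈ range (r+1), ((n-1-i).choose (r+1-i) : ℂ) * (z+1)^i * z^(r+1-i)
        + ∑ i ∈ range (r+1), z * (((n-1-i).choose (r-i) : ℂ) * (z+1)^i * z^(r-i)) := by
    rw [← Finset.sum_add_distrib]
    apply Finset.sum_congr rfl
    intro i hi
    simp only [mem_range] at hi
    have hp : (n-i).choose (r+1-i) = (n-1-i).choose (r-i) + (n-1-i).choose (r+1-i) := by
      rw [show n-i = (n-1-i)+1 by omega, show r+1-i = (r-i)+1 by omega]
      exact Nat.choose_succ_succ _ _
    rw [hp, show r+1-i = (r-i)+1 by omega]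
    push_cast
    ring
  rw [key,
    show n - (r+1) = n-1-(r+1) + 1 by omega,
    show r+1-(r+1) = 0 by omega]
  simp only [Nat.choose_zero_right]
  ring

lemma sectionId : ∀ n r : ℕ, r < n → ∀ z : ℂ,
    ∑ k ∈ range (r+1), (n.choose k : ℂ) * z ^ k
      = ∑ i ∈ range (r+1), ((n-1-i).choose (r-i) : ℂ) * (z+1)^i * z^(r-i) := by
  intro n
  induction n with
  | zero => intro r hr; omega
  | succ n ih =>
    intro r hr z
    rcases Nat.lt_succ_iff_lt_or_eq.mp hr with h | rfl
    · rcases Nat.eq_zero_or_pos r with rfl | h0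
      · simp
      · obtain ⟨s, rfl⟩ : ∃ s, r = s + 1 := ⟨r-1, by omega⟩
        simp only [Nat.add_sub_cancel]
        rw [show s+1+1 = s+2 from rfl, Brec n s z, ih (s+1) h z, ih s (by omega) z,
          Srec n s (by omega) z]
    · simp only [Nat.add_sub_cancel, Nat.choose_self, Nat.cast_one, one_mul]
      have hL : (z+1)^(r+1) = ∑ k ∈ range (r+1+1), ((r+1).choose k : ℂ) * z^k := by
        rw [add_pow]
        apply Finset.sum_congr rfl
        intro k _
        rw [one_pow]
        ring
      rw [Finset.sum_range_succ, Nat.choose_self] at hL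
      have hR := geom_sum₂_mul (z+1) z (r+1)
      simp only [Nat.add_sub_cancel, add_sub_cancel_right, mul_one] at hR
      push_cast at hL
      linear_combination -hL - hR

lemma EKid (n r : ℕ) (h2 : r + 2 ≤ n) (u : ℂ) :
    ∑ i ∈ range (r+1), ((n-1-i).choose (r-i) : ℂ) * u^i
      + u * ∑ i ∈ range (r+1), ((n-2-i).choose (r-i) : ℂ) * u^i
    = ((n-1).choose r : ℂ)
      + u * ∑ i ∈ range (r+1), ((n-1-i).choose (r-i) : ℂ) * u^i := by
  have key : ∑ i ∈ range r, ((n-1-(i+1)).choose (r-(i+1)) : ℂ) * u^(i+1)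
      + ∑ i ∈ range r, u * (((n-2-i).choose (r-i) : ℂ) * u^i)
      = ∑ i ∈ range r, u * (((n-1-i).choose (r-i) : ℂ) * u^i) := by
    rw [← Finset.sum_add_distrib]
    apply Finset.sum_congr rfl
    intro i hi
    simp only [mem_range] at hi
    have hp : (n-1-i).choose (r-i) = (n-2-i).choose (r-1-i) + (n-2-i).choose (r-i) := by
      rw [show n-1-i = (n-2-i)+1 by omega, show r-i = (r-1-i)+1 by omega]
      exact Nat.choose_succ_succ _ _
    rw [show n-1-(i+1) = n-2-i by omega, show r-(i+1) = r-1-i by omega, hp]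
    push_cast
    ring
  rw [Finset.mul_sum, Finset.mul_sum,
    Finset.sum_range_succ (fun i => u * (((n-2-i).choose (r-i) : ℂ) * u^i)) r,
    Finset.sum_range_succ (fun i => u * (((n-1-i).choose (r-i) : ℂ) * u^i)) r,
    Finset.sum_range_succ' (fun i => ((n-1-i).choose (r-i) : ℂ) * u^i) r,
    show r - r = 0 by omega]
  simp only [Nat.sub_zero, Nat.choose_zero_right, Nat.cast_one, one_mul, pow_zero, mul_one]
  linear_combination key


theorem zeros_in_half_plane (r n : ℕ) (hr : 1 ≤ r) (hrn : r + 1 < n)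
    (z : ℂ) (hz : binomialSection r n z = 0) :
    z.re > -(1 / 2) := by
  by_contra hre
  push_neg at hre
  rw [binomialSection] at hz
  have hz0 : z ≠ 0 := by
    rintro rfl
    rw [Finset.sum_eq_single 0 (by intro k _ hk; simp [zero_pow hk]) (by simp)] at hz
    simp at hz
  set u : ℂ := (z+1)/z with hu
  have habs2 : ‖z+1‖ ≤ ‖z‖ := by
    rw [Complex.norm_def, Complex.norm_def]
    apply Real.sqrt_le_sqrt
    simp only [Complex.normSq_apply, Complex.add_re, Complex.add_im, Complex.one_re,
      Complex.one_im]
    nlinarith [hre]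
  have habs : ‖u‖ ≤ 1 := by
    rw [hu, norm_div]
    exact div_le_one_of_le₀ habs2 (norm_nonneg z)
  have hT : ∑ i ∈ range (r+1), ((n-1-i).choose (r-i) : ℂ) * u^i = 0 := by
    have hid := sectionId n r (by omega) z
    have hzr : z^r ≠ 0 := pow_ne_zero _ hz0
    have hmul : z^r * ∑ i ∈ range (r+1), ((n-1-i).choose (r-i) : ℂ) * u^i
        = ∑ i ∈ range (r+1), ((n-1-i).choose (r-i) : ℂ) * (z+1)^i * z^(r-i) := by
      rw [Finset.mul_sum]
      apply Finset.sum_congr rfl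
      intro i hi
      simp only [mem_range] at hi
      have hzz : z ^ r = z ^ (r-i) * z ^ i := by rw [← pow_add]; congr 1; omega
      rw [hu, div_pow, hzz]
      field_simp
    have hS : ∑ i ∈ range (r+1), ((n-1-i).choose (r-i) : ℂ) * (z+1)^i * z^(r-i) = 0 :=
      hid.symm.trans hz
    have := hmul.trans hS
    exact (mul_eq_zero.mp this).resolve_left hzr
  have hKey : ((n-1).choose r : ℂ) = u * ∑ i ∈ range (r+1), ((n-2-i).choose (r-i) : ℂ) * u^i := by
    have h4 := EKid n r (by omega) u
    rw [hT] at h4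
    simpa using h4.symm
  have hre2 : ((n-1).choose r : ℝ) = ∑ i ∈ range (r+1), ((n-2-i).choose (r-i) : ℝ) * (u^(i+1)).re := by
    have h3 : ((n-1).choose r : ℂ) = ∑ i ∈ range (r+1), ((n-2-i).choose (r-i) : ℂ) * u^(i+1) := by
      rw [hKey, Finset.mul_sum]
      apply Finset.sum_congr rfl
      intro i _
      ring
    have h5 := congrArg Complex.re h3
    simpa [Complex.re_sum, Complex.mul_re] using h5
  have hle1 : ∀ m : ℕ, (u^m).re ≤ 1 := by
    intro m
    calc (u^m).re ≤ ‖u^m‖ := Complex.re_le_norm _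
    _ = ‖u‖^m := norm_pow _ _
    _ ≤ 1 := pow_le_one₀ (norm_nonneg u) habs
  rw [Finset.sum_range_succ' (fun i => ((n-2-i).choose (r-i) : ℝ) * (u^(i+1)).re) r] at hre2
  simp only [Nat.sub_zero, zero_add, pow_one] at hre2
  have hub : ∑ i ∈ range r, ((n-2-(i+1)).choose (r-(i+1)) : ℝ) * (u^(i+1+1)).re
      ≤ ∑ i ∈ range r, ((n-2-(i+1)).choose (r-(i+1)) : ℝ) := by
    apply Finset.sum_le_sum
    intro i _
    have h6 := hle1 (i+1+1)
    nlinarith [Nat.cast_nonneg (α := ℝ) ((n-2-(i+1)).choose (r-(i+1)))]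
  have hc : ∑ i ∈ range (r+1), ((n-2-i).choose (r-i) : ℝ) = ((n-1).choose r : ℝ) := by
    exact_mod_cast congrArg (Nat.cast : ℕ → ℝ) (hockey n r (by omega))
  rw [Finset.sum_range_succ' (fun i => ((n-2-i).choose (r-i) : ℝ)) r] at hc
  simp only [Nat.sub_zero] at hc
  have hc0pos : (0:ℝ) < ((n-2).choose r : ℝ) := by
    exact_mod_cast Nat.choose_pos (show r ≤ n-2 by omega)
  have hge : (1:ℝ) ≤ u.re := by nlinarith [hre2, hub, hc, hc0pos]
  have hult : u.re ≤ 1 := le_trans (Complex.re_le_norm u) habs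
  have hureq : u.re = 1 := le_antisymm hult hge
  have hnormsq : Complex.normSq u ≤ 1 := by
    have h7 := Complex.sq_norm u
    nlinarith [habs, norm_nonneg u]
  have him : u.im = 0 := by
    have h8 := Complex.normSq_apply u
    nlinarith [hnormsq, hureq, sq_nonneg u.im]
  have hu1 : u = 1 := Complex.ext (by simp [hureq]) (by simp [him])
  rw [hu, div_eq_one_iff_eq hz0] at hu1
  simpa using hu1
end

section
/- Let r, n be integers with 1 ≤ r < n-1, and set β = r/n. If z ∈ ℂ satisfies |z| ≤ β/(1-β) and |z|^β ≤ K_β · |1+z|, then B_{r,n}(z) ≠ 0. In particular, all zeros of B_{r,n} lie exterior to the curve C_β. -/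
/-- The constant `K_α = α^α (1-α)^(1-α)` for `0 < α < 1`. -/
noncomputable def Kconst (α : ℝ) : ℝ := α ^ α * (1 - α) ^ (1 - α)

lemma kconst_pow_identity (β : ℝ) (hβ0 : 0 < β) (hβ1 : β < 1) (r k n : ℕ)
    (hrk : r ≤ k) (hkn : k ≤ n) :
    β ^ r * (1 - β) ^ (n - r) * (β / (1 - β)) ^ (k - r)
      = β ^ k * (1 - β) ^ (n - k) := by
  have h1 : (1:ℝ) - β ≠ 0 := by linarith
  have e1 : β ^ r * β ^ (k - r) = β ^ k := by
    rw [← pow_add]; congr 1; omega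
  rw [div_pow, show n - r = (n - k) + (k - r) by omega, pow_add]
  field_simp
  linear_combination e1

theorem no_zeros_inside_curve (r n : ℕ) (hr : 1 ≤ r) (hrn : r + 1 < n)
    (β : ℝ) (hβ : β = (r : ℝ) / (n : ℝ))
    (z : ℂ) (hz1 : ‖z‖ ≤ β / (1 - β))
    (hz2 : ‖z‖ ^ β ≤ Kconst β * ‖1 + z‖) :
    binomialSection r n z ≠ 0 := by
  intro hB
  have hnpos : (0:ℝ) < (n:ℝ) := by exact_mod_cast (by omega : 0 < n)
  have hrpos : (0:ℝ) < (r:ℝ) := by exact_mod_cast hr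
  have hβ0 : 0 < β := by rw [hβ]; positivity
  have hβ1 : β < 1 := by
    rw [hβ, div_lt_one hnpos]; exact_mod_cast (by omega : r < n)
  have h1β : (0:ℝ) < 1 - β := by linarith
  set t := ‖z‖ with ht
  set a := ‖1 + z‖ with ha
  have ht0 : 0 ≤ t := norm_nonneg _
  have ha0 : 0 < a := by
    rcases (norm_nonneg (1 + z)).lt_or_eq with h | h
    · exact h
    · exfalso
      have h1z : (1 : ℂ) + z = 0 := by
        have := norm_eq_zero.mp h.symm; exact this
      have hz : z = -1 := by linear_combination h1z
      have ht1 : t = 1 := by rw [ht, hz]; simp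
      have ha' : a = 0 := h.symm
      rw [ht1, ha', mul_zero, Real.one_rpow] at hz2
      linarith
  -- Step 1: t^r ≤ Kconst β ^ n * a ^ n
  have hβn : β * (n:ℝ) = (r:ℝ) := by rw [hβ]; field_simp
  have key1 : t ^ r ≤ Kconst β ^ n * a ^ n := by
    have h := pow_le_pow_left₀ (Real.rpow_nonneg ht0 β) hz2 n
    rw [mul_pow] at h
    calc t ^ r = (t ^ β) ^ n := by
          rw [← Real.rpow_natCast (t ^ β) n, ← Real.rpow_mul ht0, hβn,
            Real.rpow_natCast]
      _ ≤ Kconst β ^ n * a ^ n := h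
  -- Step 2: (1+z)^n equals the tail sum
  have hsum : (1 + z) ^ n = ∑ k ∈ Finset.Ico (r + 1) (n + 1), (n.choose k : ℂ) * z ^ k := by
    have hb : (1 + z) ^ n = ∑ k ∈ Finset.range (n + 1), (n.choose k : ℂ) * z ^ k := by
      rw [add_comm, add_pow]
      refine Finset.sum_congr rfl fun k hk => ?_
      ring
    have hsplit := Finset.sum_range_add_sum_Ico
      (fun k => (n.choose k : ℂ) * z ^ k) (show r + 1 ≤ n + 1 by omega)
    have hB' : ∑ k ∈ Finset.range (r + 1), (n.choose k : ℂ) * z ^ k = 0 := hB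
    rw [hb, ← hsplit, hB', zero_add]
  -- Step 3: a^n ≤ tail of absolute values
  have key2 : a ^ n ≤ ∑ k ∈ Finset.Ico (r + 1) (n + 1), (n.choose k : ℝ) * t ^ k := by
    calc a ^ n = ‖(1 + z) ^ n‖ := by rw [norm_pow]
      _ = ‖∑ k ∈ Finset.Ico (r + 1) (n + 1), (n.choose k : ℂ) * z ^ k‖ := by
          rw [hsum]
      _ ≤ ∑ k ∈ Finset.Ico (r + 1) (n + 1), ‖(n.choose k : ℂ) * z ^ k‖ :=
          norm_sum_le _ _
      _ = ∑ k ∈ Finset.Ico (r + 1) (n + 1), (n.choose k : ℝ) * t ^ k := by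
          refine Finset.sum_congr rfl fun k hk => ?_
          rw [norm_mul, norm_pow, Complex.norm_natCast]
  -- Step 4: termwise bound and identity
  have key3 : a ^ n ≤
      (∑ k ∈ Finset.Ico (r + 1) (n + 1), (n.choose k : ℝ) * (β ^ k * (1 - β) ^ (n - k))) * a ^ n := by
    have hK : Kconst β ^ n = β ^ r * (1 - β) ^ (n - r) := by
      unfold Kconst
      rw [mul_pow, ← Real.rpow_natCast (β ^ β) n, ← Real.rpow_mul hβ0.le, hβn,
        Real.rpow_natCast,
        ← Real.rpow_natCast ((1 - β) ^ (1 - β)) n, ← Real.rpow_mul h1β.le]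
      congr 1
      have : (1 - β) * (n:ℝ) = ((n - r : ℕ) : ℝ) := by
        push_cast [Nat.cast_sub (by omega : r ≤ n)]
        ring_nf
        linarith [hβn]
      rw [this, Real.rpow_natCast]
    calc a ^ n ≤ ∑ k ∈ Finset.Ico (r + 1) (n + 1), (n.choose k : ℝ) * t ^ k := key2
      _ ≤ ∑ k ∈ Finset.Ico (r + 1) (n + 1),
            (n.choose k : ℝ) * (β ^ k * (1 - β) ^ (n - k)) * a ^ n := by
          refine Finset.sum_le_sum fun k hk => ?_
          obtain ⟨hk1, hk2⟩ := Finset.mem_Ico.mp hk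
          have hrk : r ≤ k := by omega
          have hkn : k ≤ n := by omega
          have htk : t ^ k = t ^ r * t ^ (k - r) := by
            rw [← pow_add]; congr 1; omega
          have hb1 : t ^ (k - r) ≤ (β / (1 - β)) ^ (k - r) :=
            pow_le_pow_left₀ ht0 hz1 _
          have hc0 : (0:ℝ) ≤ (β / (1 - β)) ^ (k - r) := by positivity
          have step : t ^ k ≤ Kconst β ^ n * a ^ n * (β / (1 - β)) ^ (k - r) := by
            calc t ^ k = t ^ r * t ^ (k - r) := htk
              _ ≤ (Kconst β ^ n * a ^ n) * (β / (1 - β)) ^ (k - r) := by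
                  have hKpos : 0 < Kconst β := by
                    unfold Kconst; positivity
                  exact mul_le_mul key1 hb1 (by positivity)
                    (mul_nonneg (pow_nonneg hKpos.le n) (pow_nonneg ha0.le n))
          have hid : Kconst β ^ n * a ^ n * (β / (1 - β)) ^ (k - r)
              = β ^ k * (1 - β) ^ (n - k) * a ^ n := by
            rw [hK]
            rw [show β ^ r * (1 - β) ^ (n - r) * a ^ n * (β / (1 - β)) ^ (k - r)
              = β ^ r * (1 - β) ^ (n - r) * (β / (1 - β)) ^ (k - r) * a ^ n by ring,
              kconst_pow_identity β hβ0 hβ1 r k n hrk hkn]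
          calc (n.choose k : ℝ) * t ^ k
              ≤ (n.choose k : ℝ) * (β ^ k * (1 - β) ^ (n - k) * a ^ n) := by
                rw [← hid]
                exact mul_le_mul_of_nonneg_left step (by positivity)
            _ = (n.choose k : ℝ) * (β ^ k * (1 - β) ^ (n - k)) * a ^ n := by ring
      _ = (∑ k ∈ Finset.Ico (r + 1) (n + 1),
            (n.choose k : ℝ) * (β ^ k * (1 - β) ^ (n - k))) * a ^ n := by
          rw [Finset.sum_mul]
  -- Step 5: the tail probability is < 1
  have hP : ∑ k ∈ Finset.Ico (r + 1) (n + 1),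
      (n.choose k : ℝ) * (β ^ k * (1 - β) ^ (n - k)) < 1 := by
    have hfull : ∑ k ∈ Finset.range (n + 1),
        (n.choose k : ℝ) * (β ^ k * (1 - β) ^ (n - k)) = 1 := by
      have h := add_pow β (1 - β) n
      have h2 : (β + (1 - β)) ^ n = 1 := by norm_num
      rw [h2] at h
      calc ∑ k ∈ Finset.range (n + 1), (n.choose k : ℝ) * (β ^ k * (1 - β) ^ (n - k))
          = ∑ k ∈ Finset.range (n + 1), β ^ k * (1 - β) ^ (n - k) * (n.choose k : ℝ) :=
            Finset.sum_congr rfl fun k _ => by ring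
        _ = 1 := h.symm
    have hsplit := Finset.sum_range_add_sum_Ico
      (fun k => (n.choose k : ℝ) * (β ^ k * (1 - β) ^ (n - k)))
      (show r + 1 ≤ n + 1 by omega)
    have hhead : 0 < ∑ k ∈ Finset.range (r + 1),
        (n.choose k : ℝ) * (β ^ k * (1 - β) ^ (n - k)) := by
      refine Finset.sum_pos (fun k hk => ?_) ⟨0, by simp⟩
      have hkn : k ≤ n := by
        have := Finset.mem_range.mp hk; omega
      have hc : 0 < (n.choose k : ℝ) := by
        exact_mod_cast Nat.choose_pos hkn
      positivity
    rw [← hsplit] at hfull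
    linarith
  -- Final contradiction
  have hapos : 0 < a ^ n := pow_pos ha0 n
  nlinarith [key3, hP, hapos]
end

section
/- Fix 0 < α < 1. For every θ ∈ [0, π] there exists a unique real r with 0 < r ≤ α/(1-α) such that r^α = K_α · |1 + r e^{iθ}|. Consequently, C_α is a closed curve symmetric about the real axis, starlike with respect to 0, meeting each ray from the origin with argument in [-π, π] in exactly one point, and it passes through the point z_α = α/(1-α). -/
/-- The curve `C_α = {z : |z|^α / |1+z| = K_α, |z| ≤ α/(1-α)}`. -/
def curveC (α : ℝ) : Set ℂ :=
  {z : ℂ | ‖z‖ ^ α / ‖1 + z‖ = Kconst α ∧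
    ‖z‖ ≤ α / (1 - α)}

namespace CurveAux

noncomputable def Qf (c t : ℝ) : ℝ := 1 + 2*c*t + t^2
noncomputable def hf (α c t : ℝ) : ℝ := α + (2*α-1)*c*t + (α-1)*t^2

lemma Qf_nonneg {c : ℝ} (hc1 : -1 ≤ c) (hc2 : c ≤ 1) (t : ℝ) : 0 ≤ Qf c t := by
  unfold Qf
  nlinarith [sq_nonneg (t + c), mul_nonneg (by linarith : (0:ℝ) ≤ 1 - c) (by linarith : (0:ℝ) ≤ 1 + c)]

lemma hf_eq_zero_of_Qf {α c t : ℝ} (hc1 : -1 ≤ c) (hc2 : c ≤ 1) (ht : 0 < t)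
    (hQ : Qf c t = 0) : hf α c t = 0 := by
  unfold Qf at hQ
  have ht1 : t = 1 := by nlinarith [sq_nonneg (t - 1)]
  have hc' : c = -1 := by nlinarith
  subst ht1; subst hc'; unfold hf; ring

lemma hf_pos {α c : ℝ} (hα0 : 0 < α) (hα1 : α < 1) {t y : ℝ} (ht : 0 < t) (hty : t < y)
    (hy : 0 ≤ hf α c y) : 0 < hf α c t := by
  have key : hf α c t * y = (y - t)*α + t * hf α c y + (1-α)*t*(y-t)*y := by
    unfold hf; ring
  have hy0 : 0 < y := ht.trans hty
  nlinarith [mul_nonneg ht.le hy,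
    mul_pos (mul_pos (mul_pos (by linarith : (0:ℝ) < 1-α) ht) (by linarith : (0:ℝ) < y - t)) hy0,
    mul_pos (by linarith : (0:ℝ) < y - t) hα0]

lemma hf_neg {α c : ℝ} (hα0 : 0 < α) (hα1 : α < 1) {y t : ℝ} (hy : 0 < y) (hyt : y < t)
    (hhy : hf α c y < 0) : hf α c t < 0 := by
  by_contra h
  push_neg at h
  exact absurd (hf_pos hα0 hα1 hy hyt h) (by linarith)

lemma rpow_two_mul {x : ℝ} (hx : 0 ≤ x) (α : ℝ) : x ^ (2*α) = (x ^ α)^2 := by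
  rw [← Real.rpow_natCast (x ^ α) 2, ← Real.rpow_mul hx]
  norm_num [mul_comm]

lemma Kpos {α : ℝ} (hα0 : 0 < α) (hα1 : α < 1) : 0 < Kconst α := by
  unfold Kconst
  have h1 : 0 < 1 - α := by linarith
  positivity

lemma endpoint_eq {α : ℝ} (hα0 : 0 < α) (hα1 : α < 1) :
    (α/(1-α)) ^ α = Kconst α * (1 + α/(1-α)) := by
  have h1 : 0 < 1 - α := by linarith
  have hz : (α/(1-α)) ^ α = α^α / (1-α)^α := Real.div_rpow hα0.le h1.le α
  have hb : (1-α)^(1-α) * (1-α)^α = 1 - α := by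
    rw [← Real.rpow_add h1]; norm_num
  have h2 : 1 + α/(1-α) = 1/(1-α) := by field_simp; ring
  have hd : (0:ℝ) < (1-α)^α := Real.rpow_pos_of_pos h1 α
  rw [hz, h2]
  unfold Kconst
  rw [mul_one_div, div_eq_div_iff hd.ne' (ne_of_gt h1)]
  linear_combination (-(α^α)) * hb

/-- MVT for `φ(t) = 2α log t - log (Qf c t)`. -/
lemma mvt_phi {α : ℝ} (c : ℝ) {a b : ℝ} (hab : a < b) (ha : 0 < a)
    (hQ : ∀ t ∈ Set.Icc a b, 0 < Qf c t) :
    ∃ ξ ∈ Set.Ioo a b,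
      (2*α*Real.log b - Real.log (Qf c b)) - (2*α*Real.log a - Real.log (Qf c a))
        = (2 * hf α c ξ / (ξ * Qf c ξ)) * (b - a) := by
  set f : ℝ → ℝ := fun t => 2*α*Real.log t - Real.log (Qf c t) with hf_def
  set f' : ℝ → ℝ := fun t => 2*α/t - (2*c+2*t)/(Qf c t) with hf'_def
  have hQd : ∀ t : ℝ, HasDerivAt (fun s => Qf c s) (2*c + 2*t) t := by
    intro t
    have h1 : HasDerivAt (fun s : ℝ => 1 + 2*c*s + s^2) (2*c + 2*t) t := by
      have := (((hasDerivAt_id t).const_mul (2*c)).const_add 1).add (hasDerivAt_pow 2 t)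
      simpa [mul_comm, Pi.add_def] using this
    exact h1
  have hderiv : ∀ t ∈ Set.Ioo a b, HasDerivAt f (f' t) t := by
    intro t ht
    have ht0 : 0 < t := ha.trans ht.1
    have hQt : 0 < Qf c t := hQ t ⟨ht.1.le, ht.2.le⟩
    exact ((Real.hasDerivAt_log ht0.ne').const_mul (2*α)).sub ((hQd t).log hQt.ne')
  have hcont : ContinuousOn f (Set.Icc a b) := by
    intro t ht
    have ht0 : 0 < t := lt_of_lt_of_le ha ht.1
    have hQt : 0 < Qf c t := hQ t ht
    have : ContinuousAt f t := by
      exact ((Real.continuousAt_log ht0.ne').comp continuousAt_id |>.const_smul (2*α) |>.sub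
        ((Real.continuousAt_log hQt.ne').comp ((hQd t).continuousAt)))
    exact this.continuousWithinAt
  obtain ⟨ξ, hξ, heq⟩ := exists_hasDerivAt_eq_slope f f' hab hcont hderiv
  refine ⟨ξ, hξ, ?_⟩
  have hξ0 : 0 < ξ := ha.trans hξ.1
  have hQξ : 0 < Qf c ξ := hQ ξ ⟨hξ.1.le, hξ.2.le⟩
  have hform : f' ξ = 2 * hf α c ξ / (ξ * Qf c ξ) := by
    rw [hf'_def]
    unfold hf Qf
    unfold Qf at hQξ
    simp only []
    rw [div_sub_div _ _ hξ0.ne' hQξ.ne']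
    congr 1
    ring
  have hba : b - a ≠ 0 := by linarith
  rw [heq] at hform
  rw [← hform]
  field_simp
  rfl

lemma root_Qpos {α c t : ℝ} (hα0 : 0 < α) (hα1 : α < 1) (hc1 : -1 ≤ c) (hc2 : c ≤ 1)
    (ht : 0 < t) (hroot : t ^ (2*α) = (Kconst α)^2 * Qf c t) : 0 < Qf c t := by
  have h1 := Real.rpow_pos_of_pos ht (2*α)
  have h2 : 0 < (Kconst α)^2 := pow_pos (Kpos hα0 hα1) 2
  nlinarith [Qf_nonneg hc1 hc2 t]

lemma phi_root {α c t : ℝ} (hα0 : 0 < α) (hα1 : α < 1) (hc1 : -1 ≤ c) (hc2 : c ≤ 1)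
    (ht : 0 < t) (hroot : t ^ (2*α) = (Kconst α)^2 * Qf c t) :
    2*α*Real.log t - Real.log (Qf c t) = Real.log ((Kconst α)^2) := by
  have hQ := root_Qpos hα0 hα1 hc1 hc2 ht hroot
  have hK : 0 < Kconst α := Kpos hα0 hα1
  have h1 : Real.log (t ^ (2*α)) = 2*α * Real.log t := Real.log_rpow ht _
  have h2 : Real.log ((Kconst α)^2 * Qf c t)
      = Real.log ((Kconst α)^2) + Real.log (Qf c t) :=
    Real.log_mul (pow_pos hK 2).ne' hQ.ne'
  rw [hroot, h2] at h1
  linarith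

lemma roots_lt_false {α c a b : ℝ} (hα0 : 0 < α) (hα1 : α < 1) (hc1 : -1 ≤ c) (hc2 : c ≤ 1)
    (ha : 0 < a) (hb : 0 < b) (hbz : b ≤ α/(1-α)) (hab : a < b)
    (hra : a ^ (2*α) = (Kconst α)^2 * Qf c a)
    (hrb : b ^ (2*α) = (Kconst α)^2 * Qf c b) : False := by
  have h1 : 0 < 1 - α := by linarith
  set z := α/(1-α) with hz_def
  have hz0 : 0 < z := by positivity
  have hK : 0 < Kconst α := Kpos hα0 hα1
  have hQa := root_Qpos hα0 hα1 hc1 hc2 ha hra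
  have hQb := root_Qpos hα0 hα1 hc1 hc2 hb hrb
  have hphia := phi_root hα0 hα1 hc1 hc2 ha hra
  have hphib := phi_root hα0 hα1 hc1 hc2 hb hrb
  have hz2α : z ^ (2*α) = (Kconst α)^2 * (1+z)^2 := by
    rw [rpow_two_mul hz0.le, endpoint_eq hα0 hα1]
    ring
  rcases le_or_gt 0 (hf α c b) with hcase | hcase
  · -- Case A : increasing part, MVT on [a,b]
    have hQ : ∀ t ∈ Set.Icc a b, 0 < Qf c t := by
      intro t ⟨h1t, h2t⟩
      rcases eq_or_lt_of_le h2t with rfl | h2t'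
      · exact hQb
      rcases eq_or_lt_of_le h1t with rfl | h1t'
      · exact hQa
      have ht0 : 0 < t := ha.trans h1t'
      have hft : 0 < hf α c t := hf_pos hα0 hα1 ht0 h2t' hcase
      rcases (Qf_nonneg hc1 hc2 t).lt_or_eq with h | h
      · exact h
      · exact absurd (hf_eq_zero_of_Qf hc1 hc2 ht0 h.symm) hft.ne'
    obtain ⟨ξ, hξ, heq⟩ := mvt_phi (α := α) c hab ha hQ
    rw [hphia, hphib, sub_self] at heq
    have hξ0 : 0 < ξ := ha.trans hξ.1
    have hQξ : 0 < Qf c ξ := hQ ξ ⟨hξ.1.le, hξ.2.le⟩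
    have hfξ : 0 < hf α c ξ := hf_pos hα0 hα1 hξ0 hξ.2 hcase
    have : 0 < 2 * hf α c ξ / (ξ * Qf c ξ) * (b - a) :=
      mul_pos (div_pos (by linarith) (mul_pos hξ0 hQξ)) (by linarith)
    linarith
  · -- Case B : hf α c b < 0
    have hcb : c < 1 := by
      by_contra hcge
      have hc : c = 1 := le_antisymm hc2 (not_lt.mp hcge)
      subst hc
      have hb' : b*(1-α) ≤ α := (le_div_iff₀ h1).mp hbz
      have : 0 ≤ hf α 1 b := by
        unfold hf
        nlinarith [mul_nonneg hb.le (sub_nonneg.2 hb')]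
      linarith
    have hbz' : b < z := by
      rcases lt_or_eq_of_le hbz with h | h
      · exact h
      · exfalso
        rw [h] at hrb
        rw [hz2α] at hrb
        have hQzlt : Qf c z < (1+z)^2 := by
          unfold Qf; nlinarith [mul_pos hz0 (by linarith : (0:ℝ) < 1 - c)]
        have hK2 : (0:ℝ) < (Kconst α)^2 := pow_pos hK 2
        nlinarith
    have hQ : ∀ t ∈ Set.Icc b z, 0 < Qf c t := by
      intro t ⟨h1t, h2t⟩
      rcases eq_or_lt_of_le h1t with rfl | h1t'
      · exact hQb
      have ht0 : 0 < t := hb.trans h1t'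
      have hft : hf α c t < 0 := hf_neg hα0 hα1 hb h1t' hcase
      rcases (Qf_nonneg hc1 hc2 t).lt_or_eq with h | h
      · exact h
      · exact absurd (hf_eq_zero_of_Qf hc1 hc2 ht0 h.symm) hft.ne
    obtain ⟨ξ, hξ, heq⟩ := mvt_phi (α := α) c hbz' hb hQ
    have hξ0 : 0 < ξ := hb.trans hξ.1
    have hQξ : 0 < Qf c ξ := hQ ξ ⟨hξ.1.le, hξ.2.le⟩
    have hfξ : hf α c ξ < 0 := hf_neg hα0 hα1 hb hξ.1 hcase
    have hneg : 2 * hf α c ξ / (ξ * Qf c ξ) * (z - b) < 0 := by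
      apply mul_neg_of_neg_of_pos
      · exact div_neg_of_neg_of_pos (by linarith) (by positivity)
      · linarith
    -- φ(z) > log K²
    have hQz : 0 < Qf c z := hQ z ⟨hbz'.le, le_refl z⟩
    have hQzlt : Qf c z < (1+z)^2 := by
      unfold Qf; nlinarith [mul_pos hz0 (by linarith : (0:ℝ) < 1 - c)]
    have hlogz : 2*α*Real.log z = Real.log ((Kconst α)^2) + Real.log ((1+z)^2) := by
      have h1' : Real.log (z ^ (2*α)) = 2*α * Real.log z := Real.log_rpow hz0 _
      have h2' : Real.log ((Kconst α)^2 * (1+z)^2)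
          = Real.log ((Kconst α)^2) + Real.log ((1+z)^2) :=
        Real.log_mul (pow_pos hK 2).ne' (pow_pos (by linarith : (0:ℝ) < 1+z) 2).ne'
      rw [hz2α, h2'] at h1'
      linarith
    have hloglt : Real.log (Qf c z) < Real.log ((1+z)^2) := Real.log_lt_log hQz hQzlt
    rw [hphib] at heq
    linarith

lemma root_exists {α : ℝ} (hα0 : 0 < α) (hα1 : α < 1) (c : ℝ) (hc2 : c ≤ 1) :
    ∃ x : ℝ, 0 < x ∧ x ≤ α/(1-α) ∧ x ^ (2*α) = (Kconst α)^2 * Qf c x := by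
  have h1 : 0 < 1 - α := by linarith
  set z := α/(1-α) with hz_def
  have hz0 : 0 < z := by positivity
  have hK : 0 < Kconst α := Kpos hα0 hα1
  set F : ℝ → ℝ := fun t => t ^ (2*α) - (Kconst α)^2 * Qf c t with hF_def
  have hcont : ContinuousOn F (Set.Icc 0 z) := by
    apply ContinuousOn.sub
    · intro t _
      exact (Real.continuousAt_rpow_const t (2*α) (Or.inr (by linarith : (0:ℝ) ≤ 2*α))).continuousWithinAt
    · apply Continuous.continuousOn
      unfold Qf
      continuity
  have hF0 : F 0 = -(Kconst α)^2 := by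
    simp only [hF_def]
    rw [Real.zero_rpow (by linarith : (0:ℝ) < 2*α).ne']
    unfold Qf; ring
  have hz2α : z ^ (2*α) = (Kconst α)^2 * (1+z)^2 := by
    rw [rpow_two_mul hz0.le, endpoint_eq hα0 hα1]
    ring
  have hFz : 0 ≤ F z := by
    simp only [hF_def]
    rw [hz2α]
    unfold Qf
    nlinarith [mul_nonneg (mul_nonneg (sq_nonneg (Kconst α)) hz0.le) (sub_nonneg.2 hc2)]
  have h0mem : (0:ℝ) ∈ Set.Icc (F 0) (F z) := by
    constructor
    · rw [hF0]; nlinarith [pow_pos hK 2]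
    · exact hFz
  obtain ⟨x, hx, hFx⟩ := intermediate_value_Icc hz0.le hcont h0mem
  have hx0 : 0 < x := by
    rcases hx.1.lt_or_eq with h | h
    · exact h
    · exfalso; rw [← h] at hFx; rw [hF0] at hFx; nlinarith
  exact ⟨x, hx0, hx.2, by simp only [hF_def] at hFx; linarith⟩

lemma abs_sq_eq {θ x : ℝ} :
    ‖1 + (x:ℂ) * Complex.exp (θ * Complex.I)‖^2 = Qf (Real.cos θ) x := by
  rw [← Complex.normSq_eq_norm_sq]
  unfold Qf
  simp [Complex.normSq_apply, Complex.exp_mul_I, Complex.cos_ofReal_re, Complex.sin_ofReal_re]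
  nlinarith [Real.sin_sq_add_cos_sq θ]

lemma eqv {α θ x : ℝ} (hα0 : 0 < α) (hα1 : α < 1) (hx : 0 < x) :
    (x ^ α = Kconst α * ‖1 + (x:ℂ) * Complex.exp (θ * Complex.I)‖)
      ↔ x ^ (2*α) = (Kconst α)^2 * Qf (Real.cos θ) x := by
  set A := ‖1 + (x:ℂ) * Complex.exp (θ * Complex.I)‖ with hA_def
  have hA2 : A^2 = Qf (Real.cos θ) x := abs_sq_eq
  have hA0 : 0 ≤ A := norm_nonneg _
  have hK : 0 < Kconst α := Kpos hα0 hα1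
  constructor
  · intro h
    rw [rpow_two_mul hx.le, h, ← hA2]; ring
  · intro h
    rw [rpow_two_mul hx.le, ← hA2] at h
    have hsq : (x ^ α)^2 = (Kconst α * A)^2 := by rw [h]; ring
    have h1 : 0 ≤ x ^ α := (Real.rpow_pos_of_pos hx α).le
    have h2 : 0 ≤ Kconst α * A := mul_nonneg hK.le hA0
    rw [← Real.sqrt_sq h1, ← Real.sqrt_sq h2, hsq]

lemma key (α θ : ℝ) (hα0 : 0 < α) (hα1 : α < 1) :
    ∃! x : ℝ, 0 < x ∧ x ≤ α / (1 - α) ∧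
      x ^ α = Kconst α * ‖1 + (x : ℂ) * Complex.exp (θ * Complex.I)‖ := by
  have hc1 : -1 ≤ Real.cos θ := Real.neg_one_le_cos θ
  have hc2 : Real.cos θ ≤ 1 := Real.cos_le_one θ
  obtain ⟨x, hx0, hxz, hxr⟩ := root_exists hα0 hα1 (Real.cos θ) hc2
  refine ⟨x, ⟨hx0, hxz, (eqv hα0 hα1 hx0).mpr hxr⟩, ?_⟩
  rintro y ⟨hy0, hyz, hyeq⟩
  have hyr := (eqv hα0 hα1 hy0).mp hyeq
  rcases lt_trichotomy y x with h | h | h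
  · exact absurd (roots_lt_false hα0 hα1 hc1 hc2 hy0 hx0 hxz h hyr hxr) id
  · exact h
  · exact absurd (roots_lt_false hα0 hα1 hc1 hc2 hx0 hy0 hyz h hxr hyr) id

end CurveAux

theorem curveC_simple_starlike (α : ℝ) (hα0 : 0 < α) (hα1 : α < 1) :
    (∀ θ ∈ Set.Icc (0 : ℝ) Real.pi, ∃! x : ℝ, 0 < x ∧ x ≤ α / (1 - α) ∧
        x ^ α = Kconst α * ‖1 + (x : ℂ) * Complex.exp (θ * Complex.I)‖) ∧
    (∀ z ∈ curveC α, (starRingEnd ℂ) z ∈ curveC α) ∧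
    (∀ θ ∈ Set.Icc (-Real.pi) Real.pi,
        ∃! x : ℝ, 0 < x ∧ (x : ℂ) * Complex.exp (θ * Complex.I) ∈ curveC α) ∧
    ((α / (1 - α) : ℝ) : ℂ) ∈ curveC α := by
  have h1 : 0 < 1 - α := by linarith
  have hz0 : 0 < α / (1 - α) := by positivity
  have hK : 0 < Kconst α := CurveAux.Kpos hα0 hα1
  refine ⟨fun θ _ => CurveAux.key α θ hα0 hα1, ?_, ?_, ?_⟩
  · rintro z ⟨hz1, hz2⟩
    have hconj : (1:ℂ) + (starRingEnd ℂ) z = (starRingEnd ℂ) (1 + z) := by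
      simp [map_add]
    refine ⟨?_, ?_⟩
    · rw [Complex.norm_conj, hconj, Complex.norm_conj]; exact hz1
    · rw [Complex.norm_conj]; exact hz2
  · intro θ _
    obtain ⟨x, ⟨hx0, hxz, hxeq⟩, huniq⟩ := CurveAux.key α θ hα0 hα1
    have habs : ∀ y : ℝ, 0 < y → ‖(y:ℂ) * Complex.exp (θ * Complex.I)‖ = y := by
      intro y hy
      rw [norm_mul, Complex.norm_exp_ofReal_mul_I, Complex.norm_real, Real.norm_eq_abs, abs_of_pos hy, mul_one]
    have hAx : ‖1 + (x:ℂ) * Complex.exp (θ * Complex.I)‖ ≠ 0 := by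
      intro h0
      rw [h0, mul_zero] at hxeq
      exact absurd hxeq (Real.rpow_pos_of_pos hx0 α).ne'
    refine ⟨x, ⟨hx0, ?_, ?_⟩, ?_⟩
    · rw [habs x hx0]
      exact (div_eq_iff hAx).mpr hxeq
    · rw [habs x hx0]; exact hxz
    · rintro y ⟨hy0, hymem, hymem2⟩
      rw [habs y hy0] at hymem hymem2
      apply huniq
      refine ⟨hy0, hymem2, ?_⟩
      have hAy : ‖1 + (y:ℂ) * Complex.exp (θ * Complex.I)‖ ≠ 0 := by
        intro h0
        rw [h0, div_zero] at hymem
        exact hK.ne hymem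
      field_simp at hymem
      linear_combination hymem
  · have hre : ‖((α / (1 - α) : ℝ) : ℂ)‖ = α / (1 - α) := by
      rw [Complex.norm_real, Real.norm_eq_abs, abs_of_pos hz0]
    have hre2 : ‖1 + ((α / (1 - α) : ℝ) : ℂ)‖ = 1 + α / (1 - α) := by
      have : (1:ℂ) + ((α / (1 - α) : ℝ) : ℂ) = (((1 + α / (1 - α) : ℝ)) : ℂ) := by
        push_cast; ring
      rw [this, Complex.norm_real, Real.norm_eq_abs, abs_of_pos (by linarith)]
    refine ⟨?_, ?_⟩
    · rw [hre, hre2, CurveAux.endpoint_eq hα0 hα1, mul_div_assoc,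
        div_self (by linarith : (1:ℝ) + α/(1-α) ≠ 0), mul_one]
    · rw [hre]
end

section
/- Fix 0 < α < 1. There exists a unique real t > 0 satisfying t^α = K_α (1 - t) (equivalently, -t is the unique intersection point of C_α with the negative real axis, t = X_α). This t satisfies ν α < t < 1/2, where ν = 0.278… is the unique positive real root of x e^{1+x} = 1. -/
/-- For `0 < u ≤ 1`, `u - u⁻¹ ≤ 2 log u`. -/
lemma aux_log_lb {u : ℝ} (hu0 : 0 < u) (hu1 : u ≤ 1) : u - u⁻¹ ≤ 2 * Real.log u := by
  set f : ℝ → ℝ := fun x => 2 * Real.log x - x + x⁻¹ with hf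
  have hD : ∀ x ∈ interior (Set.Icc u 1), HasDerivAt f (2 * x⁻¹ - 1 + -(x^2)⁻¹) x := by
    intro x hx
    rw [interior_Icc] at hx
    have hx0 : x ≠ 0 := (lt_trans hu0 hx.1).ne'
    exact (((Real.hasDerivAt_log hx0).const_mul 2).sub (hasDerivAt_id x)).add (hasDerivAt_inv hx0)
  have hc : ContinuousOn f (Set.Icc u 1) := by
    intro x hx
    have hx0 : x ≠ 0 := (lt_of_lt_of_le hu0 hx.1).ne'
    exact (((continuousAt_const.mul (Real.continuousAt_log hx0)).sub continuousAt_id).add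
      (continuousAt_inv₀ hx0)).continuousWithinAt
  have hanti : AntitoneOn f (Set.Icc u 1) := by
    apply antitoneOn_of_deriv_nonpos (convex_Icc u 1) hc
    · intro x hx; exact (hD x hx).differentiableAt.differentiableWithinAt
    · intro x hx
      rw [(hD x hx).deriv]
      rw [interior_Icc] at hx
      have hx0 : 0 < x := lt_trans hu0 hx.1
      have heq : 2 * x⁻¹ - 1 + -(x^2)⁻¹ = -((x-1)^2) / x^2 := by
        field_simp
        ring
      rw [heq]
      exact div_nonpos_of_nonpos_of_nonneg (neg_nonpos.2 (sq_nonneg _)) (by positivity)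
  have := hanti (Set.left_mem_Icc.2 hu1) (Set.right_mem_Icc.2 hu1) hu1
  simp only [hf, Real.log_one] at this
  norm_num at this
  linarith

/-- For `0 ≤ x ≤ 1/2`, `-x - x² ≤ log (1-x)`. -/
lemma aux_log_one_sub_lb {x : ℝ} (hx0 : 0 ≤ x) (hx1 : x ≤ 1/2) :
    -x - x^2 ≤ Real.log (1 - x) := by
  set f : ℝ → ℝ := fun y => Real.log (1 - y) + y + y^2 with hf
  have hD : ∀ y ∈ interior (Set.Icc (0:ℝ) (1/2)), HasDerivAt f (-(1 - y)⁻¹ + 1 + 2*y) y := by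
    intro y hy
    rw [interior_Icc] at hy
    have hy0 : (1:ℝ) - y ≠ 0 := by simp only [Set.mem_Ioo] at hy; intro h; linarith [hy.2]
    have hin : HasDerivAt (fun z : ℝ => 1 - z) (-1) y := by
      exact (hasDerivAt_id' y).const_sub 1
    have h1 : HasDerivAt (fun z : ℝ => Real.log (1 - z)) ((1-y)⁻¹ * (-1)) y :=
      (Real.hasDerivAt_log hy0).comp y hin
    have h2 : HasDerivAt (fun z : ℝ => z^2) (2*y) y := by
      simpa using hasDerivAt_pow 2 y
    have := (h1.add (hasDerivAt_id y)).add h2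
    exact this.congr_deriv (by ring)
  have hc : ContinuousOn f (Set.Icc (0:ℝ) (1/2)) := by
    intro y hy
    have hy0 : (1:ℝ) - y ≠ 0 := by
      simp only [Set.mem_Icc] at hy; intro h; linarith [hy.2]
    have h1 : ContinuousAt (fun z : ℝ => Real.log (1 - z)) y :=
      (Real.continuousAt_log hy0).comp (continuousAt_const.sub continuousAt_id)
    exact ((h1.add continuousAt_id).add (continuousAt_id.pow 2)).continuousWithinAt
  have hmono : MonotoneOn f (Set.Icc (0:ℝ) (1/2)) := by
    apply monotoneOn_of_deriv_nonneg (convex_Icc 0 (1/2)) hc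
    · intro y hy; exact (hD y hy).differentiableAt.differentiableWithinAt
    · intro y hy
      rw [(hD y hy).deriv]
      rw [interior_Icc] at hy
      obtain ⟨h0, h2⟩ := hy
      have h3 : (0:ℝ) < 1 - y := by linarith
      have heq : -(1 - y)⁻¹ + 1 + 2*y = y * (1 - 2*y) / (1 - y) := by
        field_simp
        ring
      rw [heq]
      apply div_nonneg _ h3.le
      nlinarith
  have h0m : (0:ℝ) ∈ Set.Icc (0:ℝ) (1/2) := by norm_num
  have hxm : x ∈ Set.Icc (0:ℝ) (1/2) := ⟨hx0, hx1⟩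
  have := hmono h0m hxm hx0
  simp only [hf] at this
  norm_num at this
  linarith

lemma aux_nu_half {ν : ℝ} (hν0 : 0 < ν) (hνeq : ν * Real.exp (1 + ν) = 1) : ν < 1/2 := by
  by_contra h
  push_neg at h
  have h1 : Real.exp (3/2) ≤ Real.exp (1 + ν) := Real.exp_le_exp.2 (by linarith)
  have h2 : (5/2 : ℝ) ≤ Real.exp (3/2) := by
    have := Real.add_one_le_exp (3/2 : ℝ)
    linarith
  nlinarith [Real.exp_pos (1 + ν)]

lemma aux_key {α ν : ℝ} (hα0 : 0 < α) (hα1 : α < 1) (hν0 : 0 < ν)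
    (hνeq : ν * Real.exp (1 + ν) = 1) : (ν * α) ^ α < Kconst α * (1 - ν * α) := by
  have hν2 : ν < 1/2 := aux_nu_half hν0 hνeq
  have hlogν : Real.log ν = -(1 + ν) := by
    have := congrArg Real.log hνeq
    rw [Real.log_mul hν0.ne' (Real.exp_ne_zero _), Real.log_exp, Real.log_one] at this
    linarith
  have hνα0 : 0 < ν * α := mul_pos hν0 hα0
  have hνα2 : ν * α ≤ 1/2 := by nlinarith
  have h1α : (0:ℝ) < 1 - α := by linarith
  have hL1 := aux_log_lb h1α (by linarith : (1:ℝ) - α ≤ 1)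
  have hL2 := aux_log_one_sub_lb hνα0.le hνα2
  have hinv : (1 - α) * (1 - α)⁻¹ = 1 := mul_inv_cancel₀ h1α.ne'
  have hlog : Real.log ν * α < Real.log (1 - α) * (1 - α) + Real.log (1 - ν * α) := by
    have hm := mul_le_mul_of_nonneg_left hL1 h1α.le
    rw [hlogν]
    have hq : (0:ℝ) < α^2 * (1/2 - ν^2) :=
      mul_pos (pow_pos hα0 2) (by nlinarith [mul_pos hν0 (show (0:ℝ) < 1/2 - ν by linarith)])
    nlinarith [hq]
  have e1 : ν ^ α = Real.exp (Real.log ν * α) := Real.rpow_def_of_pos hν0 α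
  have e2 : (1 - α) ^ (1 - α) = Real.exp (Real.log (1 - α) * (1 - α)) :=
    Real.rpow_def_of_pos h1α (1 - α)
  have e3 : 1 - ν * α = Real.exp (Real.log (1 - ν * α)) :=
    (Real.exp_log (by linarith)).symm
  have hmain : ν ^ α < (1 - α) ^ (1 - α) * (1 - ν * α) := by
    rw [e1, e2, e3, ← Real.exp_add]
    exact Real.exp_lt_exp.2 hlog
  have hsplit : (ν * α) ^ α = ν ^ α * α ^ α := Real.mul_rpow hν0.le hα0.le
  have hαα : (0:ℝ) < α ^ α := Real.rpow_pos_of_pos hα0 α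
  rw [hsplit]
  unfold Kconst
  calc ν ^ α * α ^ α < ((1 - α) ^ (1 - α) * (1 - ν * α)) * α ^ α :=
        mul_lt_mul_of_pos_right hmain hαα
    _ = α ^ α * (1 - α) ^ (1 - α) * (1 - ν * α) := by ring

theorem negative_axis_intersection (α : ℝ) (hα0 : 0 < α) (hα1 : α < 1) :
    (∃! ν : ℝ, 0 < ν ∧ ν * Real.exp (1 + ν) = 1) ∧
    (∃! t : ℝ, 0 < t ∧ t ^ α = Kconst α * (1 - t)) ∧
    (∀ ν t : ℝ, 0 < ν → ν * Real.exp (1 + ν) = 1 →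
      0 < t → t ^ α = Kconst α * (1 - t) → ν * α < t ∧ t < 1 / 2) := by
  have h1α : (0:ℝ) < 1 - α := by linarith
  have hK : 0 < Kconst α := mul_pos (Real.rpow_pos_of_pos hα0 α) (Real.rpow_pos_of_pos h1α (1-α))
  refine ⟨?_, ?_, ?_⟩
  · -- unique ν
    have hc : ContinuousOn (fun x : ℝ => x * Real.exp (1 + x)) (Set.Icc 0 1) :=
      (continuous_id.mul ((continuous_const.add continuous_id).rexp)).continuousOn
    have hmem : (1:ℝ) ∈ Set.Icc ((fun x : ℝ => x * Real.exp (1 + x)) 0)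
        ((fun x : ℝ => x * Real.exp (1 + x)) 1) := by
      simp only [Set.mem_Icc]
      constructor
      · norm_num
      · have := Real.add_one_le_exp (1 + 1 : ℝ)
        simp only [one_mul]
        linarith
    obtain ⟨c, hcmem, hceq0⟩ := intermediate_value_Icc (by norm_num : (0:ℝ) ≤ 1) hc hmem
    have hceq : c * Real.exp (1 + c) = 1 := hceq0
    have hc0 : 0 < c := by
      rcases lt_or_eq_of_le hcmem.1 with h | h
      · exact h
      · exfalso; rw [← h] at hceq; simp at hceq
    refine ⟨c, ⟨hc0, hceq⟩, ?_⟩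
    rintro b ⟨hb0, hbeq⟩
    rcases lt_trichotomy b c with h | h | h
    · exfalso
      have he : Real.exp (1 + b) < Real.exp (1 + c) := Real.exp_lt_exp.2 (by linarith)
      nlinarith [Real.exp_pos (1 + b), Real.exp_pos (1 + c)]
    · exact h
    · exfalso
      have he : Real.exp (1 + c) < Real.exp (1 + b) := Real.exp_lt_exp.2 (by linarith)
      nlinarith [Real.exp_pos (1 + b), Real.exp_pos (1 + c)]
  · -- unique t
    set ε : ℝ := min (1/4) ((Kconst α / 2) ^ (α⁻¹)) with hε
    have hεp : 0 < ε := lt_min (by norm_num) (Real.rpow_pos_of_pos (by linarith) _)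
    have hε14 : ε ≤ 1/4 := min_le_left _ _
    have hεK : ε ^ α ≤ Kconst α / 2 := by
      calc ε ^ α ≤ ((Kconst α / 2) ^ (α⁻¹)) ^ α :=
            Real.rpow_le_rpow hεp.le (min_le_right _ _) hα0.le
        _ = Kconst α / 2 := Real.rpow_inv_rpow (by linarith) hα0.ne'
    set g : ℝ → ℝ := fun t => t ^ α - Kconst α * (1 - t) with hg
    have hgc : ContinuousOn g (Set.Icc ε 1) := by
      intro x hx
      have hx0 : x ≠ 0 := (lt_of_lt_of_le hεp hx.1).ne'
      exact ((Real.continuousAt_rpow_const x α (Or.inl hx0)).sub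
        (continuousAt_const.mul (continuousAt_const.sub continuousAt_id))).continuousWithinAt
    have hmem : (0:ℝ) ∈ Set.Icc (g ε) (g 1) := by
      constructor
      · have hgε : g ε = ε ^ α - Kconst α * (1 - ε) := rfl
        have h34 : Kconst α * (3/4) ≤ Kconst α * (1 - ε) :=
          mul_le_mul_of_nonneg_left (by linarith) hK.le
        rw [hgε]
        linarith
      · have hg1 : g 1 = (1:ℝ) ^ α - Kconst α * (1 - 1) := rfl
        rw [hg1, Real.one_rpow]
        norm_num
    obtain ⟨t, htmem, hteq⟩ := intermediate_value_Icc (by linarith : ε ≤ 1) hgc hmem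
    have ht0 : 0 < t := lt_of_lt_of_le hεp htmem.1
    have hteq' : t ^ α = Kconst α * (1 - t) := by
      have : g t = t ^ α - Kconst α * (1 - t) := rfl
      rw [this] at hteq; linarith
    refine ⟨t, ⟨ht0, hteq'⟩, ?_⟩
    rintro b ⟨hb0, hbeq⟩
    rcases lt_trichotomy b t with h | h | h
    · exfalso
      have h1 : b ^ α < t ^ α := Real.rpow_lt_rpow hb0.le h hα0
      have h2 : Kconst α * (1 - t) < Kconst α * (1 - b) :=
        mul_lt_mul_of_pos_left (by linarith) hK
      linarith
    · exact h
    · exfalso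
      have h1 : t ^ α < b ^ α := Real.rpow_lt_rpow ht0.le h hα0
      have h2 : Kconst α * (1 - b) < Kconst α * (1 - t) :=
        mul_lt_mul_of_pos_left (by linarith) hK
      linarith
  · -- bounds
    intro ν t hν0 hνeq ht0 hteq
    constructor
    · by_contra h
      push_neg at h
      have h1 : t ^ α ≤ (ν * α) ^ α := Real.rpow_le_rpow ht0.le h hα0.le
      have h2 : (ν * α) ^ α < Kconst α * (1 - ν * α) := aux_key hα0 hα1 hν0 hνeq
      have h3 : Kconst α * (1 - ν * α) ≤ Kconst α * (1 - t) :=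
        mul_le_mul_of_nonneg_left (by linarith) hK.le
      linarith
    · by_contra h
      push_neg at h
      have h1 : (1/2 : ℝ) ^ α ≤ t ^ α := Real.rpow_le_rpow (by norm_num) h hα0.le
      have h2 : Kconst α * (1 - t) ≤ Kconst α * (1/2) :=
        mul_le_mul_of_nonneg_left (by linarith) hK.le
      have hKlt : Kconst α < 2 ^ (1 - α) := by
        have ha : α ^ α < 1 := Real.rpow_lt_one hα0.le hα1 hα0
        have hb : (1 - α) ^ (1 - α) < 2 ^ (1 - α) :=
          Real.rpow_lt_rpow h1α.le (by linarith) h1α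
        have h0a : (0:ℝ) ≤ α ^ α := (Real.rpow_pos_of_pos hα0 α).le
        have h0b : (0:ℝ) ≤ (1 - α) ^ (1 - α) := (Real.rpow_pos_of_pos h1α (1-α)).le
        calc Kconst α = α ^ α * (1 - α) ^ (1 - α) := rfl
          _ < 1 * (2 ^ (1 - α)) := mul_lt_mul'' ha hb h0a h0b
          _ = 2 ^ (1 - α) := one_mul _
      have h2a : (2:ℝ) ^ (1 - α) = 2 * (1/2 : ℝ) ^ α := by
        have e1 : (1/2 : ℝ) ^ α = ((2:ℝ) ^ α)⁻¹ := by
          rw [show (1/2 : ℝ) = 2⁻¹ by norm_num, Real.inv_rpow (by norm_num)]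
        have e2 : (2:ℝ) ^ (1 - α) = 2 ^ (1:ℝ) * 2 ^ (-α) := by
          rw [← Real.rpow_add (by norm_num : (0:ℝ) < 2)]
          ring_nf
        rw [e2, Real.rpow_one, Real.rpow_neg (by norm_num), e1]
      have hhalf : (0:ℝ) < (1/2 : ℝ) ^ α := Real.rpow_pos_of_pos (by norm_num) α
      nlinarith
end

section
/- Fix 0 < α < 1, and let X_α be the unique positive real with X_α^α = K_α (1 - X_α). Then every z ∈ C_α satisfies X_α ≤ |z| ≤ α/(1-α), and |z| = α/(1-α) holds only for z = α/(1-α). -/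
theorem curveC_modulus_bounds (α : ℝ) (hα0 : 0 < α) (hα1 : α < 1)
    (X : ℝ) (hX0 : 0 < X) (hXeq : X ^ α = Kconst α * (1 - X)) :
    ∀ z ∈ curveC α, X ≤ ‖z‖ ∧ ‖z‖ ≤ α / (1 - α) ∧
      (‖z‖ = α / (1 - α) → z = ((α / (1 - α) : ℝ) : ℂ)) := by
  intro z hz
  obtain ⟨h1, h2⟩ := hz
  set r := ‖z‖ with hrdef
  have h1α : 0 < 1 - α := by linarith
  have hK : 0 < Kconst α :=
    mul_pos (Real.rpow_pos_of_pos hα0 _) (Real.rpow_pos_of_pos h1α _)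
  have hr0 : 0 ≤ r := norm_nonneg z
  have habs : (0:ℝ) < ‖1 + z‖ := by
    rcases (norm_nonneg (1+z)).eq_or_lt with h | h
    · rw [← h, div_zero] at h1; exact absurd h1 (ne_of_lt hK)
    · exact h
  have hkey : r ^ α = Kconst α * ‖1 + z‖ := by
    field_simp at h1; linarith [h1]
  -- lower triangle inequality
  have htri : 1 - r ≤ ‖1 + z‖ := by
    have h := norm_add_le (1 + z) (-z)
    rw [show (1:ℂ) + z + -z = 1 by ring] at h
    simp only [norm_one] at h
    rw [norm_neg z] at h
    linarith
  have hlow : Kconst α * (1 - r) ≤ r ^ α := by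
    rw [hkey]
    exact mul_le_mul_of_nonneg_left htri (le_of_lt hK)
  have hXr : X ≤ r := by
    by_contra hlt
    push_neg at hlt
    have h3 : r ^ α < X ^ α := Real.rpow_lt_rpow hr0 hlt hα0
    have h4 : Kconst α * (1 - X) < Kconst α * (1 - r) :=
      mul_lt_mul_of_pos_left (by linarith) hK
    linarith [hXeq ▸ h4, hlow]
  refine ⟨hXr, h2, ?_⟩
  intro heq
  -- compute r ^ α = Kconst α * (1 + r)
  have hrpow : r ^ α = Kconst α * (1 + r) := by
    rw [heq, Real.div_rpow hα0.le h1α.le]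
    have h1r : 1 + α / (1 - α) = 1 / (1 - α) := by field_simp; ring
    rw [h1r]
    unfold Kconst
    rw [Real.rpow_sub h1α, Real.rpow_one]
    have hne : (1 - α) ^ α ≠ 0 := ne_of_gt (Real.rpow_pos_of_pos h1α α)
    field_simp
  have habs1 : ‖1 + z‖ = 1 + r := by
    rw [hkey] at hrpow
    exact mul_left_cancel₀ (ne_of_gt hK) hrpow
  -- deduce z is the positive real r
  have hsq : Complex.normSq (1 + z) = (1 + r) ^ 2 := by
    rw [← Complex.sq_norm, habs1]
  have hnz : Complex.normSq z = r ^ 2 := by rw [← Complex.sq_norm]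
  have hre : z.re = r := by
    have e1 : Complex.normSq (1 + z) = 1 + 2 * z.re + Complex.normSq z := by
      simp [Complex.normSq_apply]; ring
    rw [e1, hnz] at hsq
    nlinarith
  have him : z.im = 0 := by
    have : z.re ^ 2 + z.im ^ 2 = r ^ 2 := by
      rw [← hnz]; simp [Complex.normSq_apply]; ring
    nlinarith [sq_nonneg z.im]
  apply Complex.ext
  · rw [hre, heq, Complex.ofReal_re]
  · rw [him, Complex.ofReal_im]
end

section
/- Let (b_k)_{k≥0} be a sequence of nonnegative reals with b_0 > b_1 ≥ 0 and b_1 b_{k-1} - b_0 b_k ≥ 0 for all k ≥ 1 (so that b_k ≤ (b_1/b_0)^k b_0, and f(z) = ∑_{k=0}^∞ b_k z^k converges absolutely for |z| ≤ 1). Then for every z ∈ ℂ with |z| ≤ 1, |f(z)| ≥ ((b_0 - b_1)/(b_0 + b_1)) · f(1). -/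
set_option maxHeartbeats 1000000


theorem lower_bound_lemma (b : ℕ → ℝ)
    (hpos : ∀ k, 0 ≤ b k) (hb1 : 0 ≤ b 1) (hb01 : b 1 < b 0)
    (hdec : ∀ k : ℕ, 1 ≤ k → 0 ≤ b 1 * b (k - 1) - b 0 * b k) :
    ∀ z : ℂ, ‖z‖ ≤ 1 →
      (b 0 - b 1) / (b 0 + b 1) * (∑' k : ℕ, b k) ≤
        ‖∑' k : ℕ, (b k : ℂ) * z ^ k‖ := by
  intro z hz
  have hb0 : 0 < b 0 := lt_of_le_of_lt hb1 hb01
  have hzn : ∀ n : ℕ, ‖z‖ ^ n ≤ 1 := fun n => pow_le_one₀ (norm_nonneg z) hz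
  -- ratio
  have hratio : ∀ n : ℕ, b (n + 1) ≤ (b 1 / b 0) * b n := by
    intro n
    have h := hdec (n + 1) (Nat.le_add_left 1 n)
    simp only [Nat.add_sub_cancel] at h
    rw [div_mul_eq_mul_div, le_div_iff₀ hb0]
    nlinarith
  have hr1 : b 1 / b 0 < 1 := (div_lt_one hb0).2 hb01
  have hsb : Summable b := by
    apply summable_of_ratio_norm_eventually_le hr1
    filter_upwards with n
    rw [Real.norm_of_nonneg (hpos _), Real.norm_of_nonneg (hpos _)]
    exact hratio n
  have hsF : Summable (fun k : ℕ => (b k : ℂ) * z ^ k) := by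
    apply Summable.of_norm_bounded hsb
    intro k
    rw [norm_mul, norm_pow, Complex.norm_real, Real.norm_of_nonneg (hpos _)]
    calc b k * ‖z‖ ^ k ≤ b k * 1 := by
          exact mul_le_mul_of_nonneg_left (hzn k) (hpos k)
      _ = b k := mul_one _
  set c : ℕ → ℝ := fun k => b 1 * b k - b 0 * b (k + 1) with hc_def
  have hc : ∀ k, 0 ≤ c k := by
    intro k
    have h := hdec (k + 1) (Nat.le_add_left 1 k)
    simp only [Nat.add_sub_cancel] at h
    simp only [hc_def]
    linarith
  have hsb1 : Summable (fun k : ℕ => b (k + 1)) := (summable_nat_add_iff 1).2 hsb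
  have hsc : Summable c := (hsb.mul_left (b 1)).sub (hsb1.mul_left (b 0))
  set S : ℝ := ∑' k : ℕ, b k with hS_def
  set F : ℂ := ∑' k : ℕ, (b k : ℂ) * z ^ k with hF_def
  -- sum of c
  have hsum_shift : (∑' k : ℕ, b (k + 1)) = S - b 0 := by
    have := Summable.tsum_eq_zero_add hsb
    rw [hS_def]
    linarith [this]
  have hsumc : (∑' k, c k) = b 0 ^ 2 - (b 0 - b 1) * S := by
    rw [hc_def]
    rw [Summable.tsum_sub (hsb.mul_left (b 1)) (hsb1.mul_left (b 0)), tsum_mul_left, tsum_mul_left,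
      hsum_shift]
    ring
  -- complex summabilities
  have hsF1 : Summable (fun k : ℕ => (b (k + 1) : ℂ) * z ^ (k + 1)) :=
    (summable_nat_add_iff 1).2 hsF
  have hsG : Summable (fun k : ℕ => (c k : ℂ) * z ^ (k + 1)) := by
    have : (fun k : ℕ => (c k : ℂ) * z ^ (k + 1)) =
        (fun k : ℕ => ((b 1 : ℂ)) * ((b k : ℂ) * z ^ k) * z -
          ((b 0 : ℂ)) * ((b (k + 1) : ℂ) * z ^ (k + 1))) := by
      funext k; push_cast [hc_def]; ring
    rw [this]
    exact ((hsF.mul_left _).mul_right z).sub (hsF1.mul_left _)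
  set G : ℂ := ∑' k : ℕ, (c k : ℂ) * z ^ (k + 1) with hG_def
  -- key identity
  have hkey : ((b 0 : ℂ) - (b 1 : ℂ) * z) * F = (b 0 : ℂ) ^ 2 - G := by
    have h1 : (b 0 : ℂ) * F = (b 0 : ℂ) ^ 2 + ∑' k, (b 0 : ℂ) * ((b (k + 1) : ℂ) * z ^ (k + 1)) := by
      rw [hF_def, ← tsum_mul_left, Summable.tsum_eq_zero_add (hsF.mul_left _)]
      simp [sq]
    have h2 : (b 1 : ℂ) * z * F = ∑' k, (b 1 : ℂ) * ((b k : ℂ) * z ^ k) * z := by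
      rw [hF_def, ← tsum_mul_left]
      exact tsum_congr fun k => by ring
    have h3 : G = (∑' k, (b 1 : ℂ) * ((b k : ℂ) * z ^ k) * z)
        - ∑' k, (b 0 : ℂ) * ((b (k + 1) : ℂ) * z ^ (k + 1)) := by
      rw [hG_def, ← Summable.tsum_sub ((hsF.mul_left _).mul_right z) (hsF1.mul_left _)]
      congr 1; funext k; push_cast [hc_def]; ring
    have : ((b 0 : ℂ) - (b 1 : ℂ) * z) * F = (b 0 : ℂ) * F - (b 1 : ℂ) * z * F := by ring
    rw [this, h1, h2, h3]
    ring
  -- bound |G|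
  have hGle : ‖G‖ ≤ ∑' k, c k := by
    rw [hG_def]
    calc ‖∑' k : ℕ, (c k : ℂ) * z ^ (k + 1)‖ ≤ ∑' k : ℕ, ‖(c k : ℂ) * z ^ (k + 1)‖ :=
          norm_tsum_le_tsum_norm hsG.norm
      _ ≤ ∑' k, c k := by
          apply Summable.tsum_le_tsum _ hsG.norm hsc
          intro k
          rw [norm_mul, norm_pow, Complex.norm_real, Real.norm_of_nonneg (hc k)]
          calc c k * ‖z‖ ^ (k + 1) ≤ c k * 1 :=
                mul_le_mul_of_nonneg_left (hzn _) (hc k)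
            _ = c k := mul_one _
  -- lower bound for |(b0 - b1 z) F|
  have hlow : (b 0 - b 1) * S ≤ ‖((b 0 : ℂ) - (b 1 : ℂ) * z) * F‖ := by
    rw [hkey]
    have h1 : b 0 ^ 2 - ‖G‖ ≤ ‖(b 0 : ℂ) ^ 2 - G‖ := by
      have h3 := norm_sub_norm_le ((b 0 : ℂ) ^ 2) G
      have h2 : ‖((b 0 : ℂ)) ^ 2‖ = b 0 ^ 2 := by
        rw [norm_pow, Complex.norm_real, Real.norm_of_nonneg hb0.le]
      linarith
    linarith
  -- upper bound for |b0 - b1 z|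
  have hup : ‖(b 0 : ℂ) - (b 1 : ℂ) * z‖ ≤ b 0 + b 1 := by
    calc ‖(b 0 : ℂ) - (b 1 : ℂ) * z‖
        ≤ ‖(b 0 : ℂ)‖ + ‖(b 1 : ℂ) * z‖ := by
          exact norm_sub_le (b 0 : ℂ) ((b 1 : ℂ) * z)
      _ ≤ b 0 + b 1 := by
          rw [norm_mul, Complex.norm_real, Complex.norm_real, Real.norm_of_nonneg hb0.le,
            Real.norm_of_nonneg hb1]
          nlinarith [hzn 1, pow_one ‖z‖, hz, norm_nonneg z]
  have hprod : (b 0 - b 1) * S ≤ (b 0 + b 1) * ‖F‖ := by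
    calc (b 0 - b 1) * S ≤ ‖((b 0 : ℂ) - (b 1 : ℂ) * z) * F‖ := hlow
      _ = ‖(b 0 : ℂ) - (b 1 : ℂ) * z‖ * ‖F‖ := norm_mul _ _
      _ ≤ (b 0 + b 1) * ‖F‖ :=
          mul_le_mul_of_nonneg_right hup (norm_nonneg F)
  have hden : 0 < b 0 + b 1 := by linarith
  rw [div_mul_eq_mul_div, div_le_iff₀ hden]
  calc (b 0 - b 1) * S ≤ (b 0 + b 1) * ‖F‖ := hprod
    _ = ‖F‖ * (b 0 + b 1) := mul_comm _ _
end

section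
/- Let r, n be integers with 1 ≤ r < n, and set β = r/n. Then for every z ∈ ℂ with |z| ≤ β/(1-β), |R_{r,n}(z)| ≤ K_β^{-n} · ∑_{k=r+1}^{n} C(n,k) β^k (1-β)^{n-k} ≤ K_β^{-n}. -/
/-- For integers `1 ≤ r < n`, the remainder term `R_{r,n}(z) = ∑_{k=r+1}^n C(n,k) z^{k-r}`. -/
noncomputable def binomialRemainder (r n : ℕ) (z : ℂ) : ℂ :=
  ∑ k ∈ Finset.Icc (r + 1) n, (n.choose k : ℂ) * z ^ (k - r)

theorem remainder_upper_bound (r n : ℕ) (hr : 1 ≤ r) (hrn : r < n)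
    (β : ℝ) (hβ : β = (r : ℝ) / (n : ℝ))
    (z : ℂ) (hz : ‖z‖ ≤ β / (1 - β)) :
    ‖binomialRemainder r n z‖ ≤
        Kconst β ^ (-(n : ℤ)) *
          ∑ k ∈ Finset.Icc (r + 1) n, (n.choose k : ℝ) * β ^ k * (1 - β) ^ (n - k) ∧
      Kconst β ^ (-(n : ℤ)) *
          ∑ k ∈ Finset.Icc (r + 1) n, (n.choose k : ℝ) * β ^ k * (1 - β) ^ (n - k) ≤
        Kconst β ^ (-(n : ℤ)) := by
  have hn : 0 < n := lt_of_le_of_lt (Nat.zero_le r) hrn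
  have hnR : (0:ℝ) < n := by exact_mod_cast hn
  have hrR : (0:ℝ) < r := by exact_mod_cast hr
  have hβ0 : 0 < β := by rw [hβ]; positivity
  have hβ1 : β < 1 := by rw [hβ, div_lt_one hnR]; exact_mod_cast hrn
  have h1β : (0:ℝ) < 1 - β := by linarith
  have hKn : Kconst β ^ n = β ^ r * (1 - β) ^ (n - r) := by
    rw [Kconst, mul_pow, ← Real.rpow_natCast (β ^ β) n,
        ← Real.rpow_natCast ((1-β)^(1-β)) n,
        ← Real.rpow_mul hβ0.le, ← Real.rpow_mul h1β.le]
    have h1 : β * n = (r:ℝ) := by rw [hβ]; field_simp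
    have h2 : (1 - β) * n = ((n - r : ℕ) : ℝ) := by
      rw [hβ, Nat.cast_sub hrn.le]; field_simp
    rw [h1, h2, Real.rpow_natCast, Real.rpow_natCast]
  have hKpos : 0 < Kconst β := by
    rw [Kconst]; positivity
  have hKz : Kconst β ^ (-(n:ℤ)) = (Kconst β ^ n)⁻¹ := by
    rw [zpow_neg, zpow_natCast]
  -- termwise identity
  have hterm : ∀ k ∈ Finset.Icc (r+1) n,
      Kconst β ^ (-(n:ℤ)) * ((n.choose k : ℝ) * β ^ k * (1 - β) ^ (n - k))
        = (n.choose k : ℝ) * (β / (1 - β)) ^ (k - r) := by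
    intro k hk
    simp only [Finset.mem_Icc] at hk
    have e1 : β ^ k = β ^ r * β ^ (k - r) := by rw [← pow_add]; congr 1; omega
    have e2 : (1-β) ^ (n - r) = (1-β) ^ (n - k) * (1-β) ^ (k - r) := by
      rw [← pow_add]; congr 1; omega
    rw [hKz, hKn, div_pow, e1, e2]
    field_simp
  have hq0 : (0:ℝ) ≤ β / (1 - β) := by positivity
  constructor
  · calc ‖binomialRemainder r n z‖
        ≤ ∑ k ∈ Finset.Icc (r+1) n, (n.choose k : ℝ) * (β / (1 - β)) ^ (k - r) := by
          rw [binomialRemainder]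
          refine le_trans (norm_sum_le _ _) ?_
          apply Finset.sum_le_sum
          intro k hk
          rw [norm_mul, norm_pow]
          simp only [Complex.norm_natCast]
          gcongr
      _ = Kconst β ^ (-(n:ℤ)) *
          ∑ k ∈ Finset.Icc (r + 1) n, (n.choose k : ℝ) * β ^ k * (1 - β) ^ (n - k) := by
          rw [Finset.mul_sum]
          exact (Finset.sum_congr rfl hterm).symm
  · have hS : ∑ k ∈ Finset.Icc (r + 1) n, (n.choose k : ℝ) * β ^ k * (1 - β) ^ (n - k) ≤ 1 := by
      have hfull := add_pow β (1 - β) n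
      have hone : β + (1 - β) = 1 := by ring
      rw [hone, one_pow] at hfull
      calc ∑ k ∈ Finset.Icc (r + 1) n, (n.choose k : ℝ) * β ^ k * (1 - β) ^ (n - k)
          = ∑ k ∈ Finset.Icc (r + 1) n, β ^ k * (1 - β) ^ (n - k) * (n.choose k : ℝ) := by
            apply Finset.sum_congr rfl; intros; ring
        _ ≤ ∑ k ∈ Finset.range (n+1), β ^ k * (1 - β) ^ (n - k) * (n.choose k : ℝ) := by
            apply Finset.sum_le_sum_of_subset_of_nonneg
            · intro k hk
              simp only [Finset.mem_Icc, Finset.mem_range] at *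
              omega
            · intros; positivity
        _ = 1 := hfull.symm
    have hKnneg : (0:ℝ) ≤ Kconst β ^ (-(n:ℤ)) := by positivity
    calc Kconst β ^ (-(n:ℤ)) * ∑ k ∈ Finset.Icc (r + 1) n, (n.choose k : ℝ) * β ^ k * (1 - β) ^ (n - k)
        ≤ Kconst β ^ (-(n:ℤ)) * 1 := mul_le_mul_of_nonneg_left hS hKnneg
      _ = Kconst β ^ (-(n:ℤ)) := mul_one _
end
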